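/- arXiv:2511.02313 — 5 statements merged into one kernel-verified Lean document; each statement's English description precedes it below -/
import Mathlib

section
/- Let q be a prime power and let d ≥ 1 and k ≥ 2 be integers. There exists a constant C > 0, depending only on k, such that the following holds. Let G = G(V,E) be a tree with vertex set V = {v_1, ..., v_{k+1}} (so |E| = k). If A_1, ..., A_{k+1} ⊆ 𝔽_q^d satisfy |A_i||A_j| ≥ C·q^{d+k-1} for every edge {v_i, v_j} ∈ E, then Π_G(A_1 × A_2 × ··· × A_{k+1}) contains every function α : E → 𝔽_q^* (equivalently, Π_G(A_1 × ··· × A_{k+1}) ⊇ (𝔽_q^*)^k, identifying functions E → 𝔽_q with vectors indexed by E). -/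
/-- The dot product on `𝔽_q^d`. -/
def dotp {F : Type} [Field F] {d : ℕ} (x y : Fin d → F) : F := ∑ i, x i * y i

open Finset SimpleGraph

set_option linter.unusedSectionVars false

open Finset

section dotlemmas
variable {F : Type} [Field F] {d : ℕ}

lemma dotp_add_left (x x' y : Fin d → F) : dotp (x + x') y = dotp x y + dotp x' y := by
  simp [dotp, add_mul, Finset.sum_add_distrib]

lemma dotp_smul_left (c : F) (x y : Fin d → F) : dotp (c • x) y = c * dotp x y := by
  simp [dotp, Finset.mul_sum, mul_assoc]

lemma dotp_comm (x y : Fin d → F) : dotp x y = dotp y x := by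
  simp [dotp, mul_comm]

lemma dotp_single (j : Fin d) (c : F) (y : Fin d → F) :
    dotp (fun i => if i = j then c else 0) y = c * y j := by
  rw [dotp, Finset.sum_eq_single j] <;> simp +contextual

lemma dotp_sub_left (x x' y : Fin d → F) : dotp (x - x') y = dotp x y - dotp x' y := by
  simp [dotp, sub_mul, Finset.sum_sub_distrib]

lemma dotp_zero_left (y : Fin d → F) : dotp 0 y = 0 := by simp [dotp]

/-- nondegeneracy -/
lemma eq_of_dotp_eq (y y' : Fin d → F) (h : ∀ x, dotp x y = dotp x y') : y = y' := by
  funext j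
  have := h (fun i => if i = j then 1 else 0)
  simpa [dotp_single] using this

end dotlemmas

lemma card_fiber_mul {M W : Type} [AddCommGroup M] [AddCommGroup W] [Fintype M] [Fintype W]
    [DecidableEq W] (f : M → W) (hadd : ∀ a b, f (a + b) = f a + f b)
    (hsurj : Function.Surjective f) (w : W) :
    (univ.filter fun x => f x = w).card * Fintype.card W = Fintype.card M := by
  have key : ∀ w' : W, (univ.filter fun x => f x = w').card
      = (univ.filter fun x => f x = w).card := by
    intro w'
    obtain ⟨z, hz⟩ := hsurj (w' - w)
    apply Finset.card_bij' (fun x _ => x - z) (fun x _ => x + z)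
    · intro a ha
      simp only [mem_filter, mem_univ, true_and] at ha ⊢
      have : f (a - z + z) = f (a - z) + f z := hadd _ _
      simp only [sub_add_cancel] at this
      have h2 : f (a - z) = f a - f z := by rw [eq_sub_iff_add_eq, this]
      rw [h2, ha, hz]; abel
    · intro a ha
      simp only [mem_filter, mem_univ, true_and] at ha ⊢
      rw [hadd, ha, hz]; abel
    · intro a _; simp
    · intro a _; simp
  have hpart : Fintype.card M = ∑ w' : W, (univ.filter fun x => f x = w').card := by
    rw [← Finset.card_univ]
    exact Finset.card_eq_sum_card_fiberwise (fun x _ => mem_univ (f x))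
  rw [hpart]
  simp only [key]
  rw [Finset.sum_const, card_univ, smul_eq_mul, mul_comm]



section fiber
variable {F : Type} [Field F] [Fintype F] {d : ℕ}

lemma surj_dotp (y : Fin d → F) (hy : y ≠ 0) : Function.Surjective (fun x => dotp x y) := by
  obtain ⟨j, hj⟩ : ∃ j, y j ≠ 0 := by
    by_contra h; push_neg at h; exact hy (funext h)
  intro s
  refine ⟨fun i => if i = j then s / y j else 0, ?_⟩
  simp only [dotp_single]
  field_simp

lemma card_fun_eq : Fintype.card (Fin d → F) = Fintype.card F ^ d := by
  simp [Fintype.card_fun]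

/-- L1 -/
lemma card_fiber_dotp [DecidableEq F] (y : Fin d → F) (hy : y ≠ 0) (a : F) :
    (univ.filter fun x : Fin d → F => dotp x y = a).card * Fintype.card F
      = Fintype.card F ^ d := by
  rw [← card_fun_eq]
  exact card_fiber_mul _ (fun p q => dotp_add_left p q y) (surj_dotp y hy) a

/-- surjectivity of the pair map for independent vectors -/
lemma surj_pair (y y' : Fin d → F) (hy : y ≠ 0) (hspan : ∀ c : F, y' ≠ c • y) :
    Function.Surjective (fun x => (dotp x y, dotp x y')) := by
  obtain ⟨u, hu⟩ := surj_dotp y hy 1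
  simp only at hu
  have hw : ∃ w, dotp w y = 0 ∧ dotp w y' = 1 := by
    by_contra hcon
    push_neg at hcon
    have hker : ∀ w, dotp w y = 0 → dotp w y' = 0 := by
      intro w hw0
      by_contra ht
      have := hcon ((dotp w y')⁻¹ • w)
      rw [dotp_smul_left, dotp_smul_left, hw0, mul_zero] at this
      exact (this rfl) (inv_mul_cancel₀ ht)
    apply hspan (dotp u y')
    apply eq_of_dotp_eq
    intro x
    have h0 : dotp (x - (dotp x y) • u) y = 0 := by
      rw [dotp_sub_left, dotp_smul_left, hu, mul_one, sub_self]
    have := hker _ h0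
    rw [dotp_sub_left, dotp_smul_left, sub_eq_zero] at this
    rw [this, dotp_comm x (dotp u y' • y), dotp_smul_left, dotp_comm y x, mul_comm]
  obtain ⟨w, hw0, hw1⟩ := hw
  rintro ⟨s, t⟩
  refine ⟨s • u + (t - s * dotp u y') • w, ?_⟩
  simp only [dotp_add_left, dotp_smul_left, hu, hw0, hw1, Prod.mk.injEq]
  constructor <;> ring

/-- L2 -/
lemma card_fiber_pair [DecidableEq F] (y y' : Fin d → F) (hy : y ≠ 0) (hy' : y' ≠ 0)
    (hne : y ≠ y') (a : F) (ha : a ≠ 0) :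
    ((univ.filter fun x : Fin d → F => dotp x y = a ∧ dotp x y' = a).card : ℝ)
      * (Fintype.card F : ℝ) ^ 2 ≤ (Fintype.card F : ℝ) ^ d := by
  by_cases hspan : ∃ c : F, y' = c • y
  · obtain ⟨c, rfl⟩ := hspan
    have hc0 : c ≠ 0 := by rintro rfl; simp at hy'
    have hc1 : c ≠ 1 := by rintro rfl; simp at hne
    have : (univ.filter fun x : Fin d → F => dotp x y = a ∧ dotp x (c • y) = a) = ∅ := by
      apply Finset.filter_false_of_mem
      rintro x - ⟨h1, h2⟩
      rw [dotp_comm, dotp_smul_left, dotp_comm y x, h1] at h2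
      exact hc1 (by field_simp at h2; tauto)
    rw [this]
    simp [pow_nonneg]
  · push_neg at hspan
    have hsurj := surj_pair y y' hy hspan
    have hcard := card_fiber_mul (fun x => (dotp x y, dotp x y'))
      (fun p q => by simp [dotp_add_left, Prod.ext_iff]) hsurj (a, a)
    have : (univ.filter fun x : Fin d → F => dotp x y = a ∧ dotp x y' = a).card
        * (Fintype.card F) ^ 2 = Fintype.card F ^ d := by
      rw [← card_fun_eq (F := F) (d := d), ← hcard]
      congr 1
      · congr 1; ext x; simp [Prod.ext_iff]
      · rw [Fintype.card_prod]; ring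
    calc ((univ.filter fun x : Fin d → F => dotp x y = a ∧ dotp x y' = a).card : ℝ)
          * (Fintype.card F : ℝ) ^ 2
        = ((Fintype.card F : ℕ) ^ d : ℕ) := by rw [← this]; push_cast; ring
      _ ≤ _ := by push_cast; exact le_refl _
  
end fiber



section cheby
variable {F : Type} [Field F] [Fintype F] [DecidableEq F] {d : ℕ}

lemma cheby (B : Finset (Fin d → F)) (hB0 : (0 : Fin d → F) ∉ B) (hBne : 0 < B.card)
    (a : F) (ha : a ≠ 0) :
    ((univ.filter fun x : Fin d → F =>
        (B.card : ℝ) > 2 * (Fintype.card F : ℝ)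
          * ((B.filter fun y => dotp x y = a).card : ℝ)).card : ℝ) * (B.card : ℝ)
      ≤ 4 * (Fintype.card F : ℝ) ^ (d + 1) := by
  classical
  set q : ℝ := (Fintype.card F : ℝ) with hqdef
  have hq : (0:ℝ) < q := by
    simp only [hqdef]; exact_mod_cast Fintype.card_pos
  set f : (Fin d → F) → ℝ := fun x => ((B.filter fun y => dotp x y = a).card : ℝ) with hf
  have hBy : ∀ y ∈ B, y ≠ 0 := fun y hy h0 => hB0 (h0 ▸ hy)
  -- single-fiber count in ℝ
  have hL1 : ∀ y : Fin d → F, y ≠ 0 →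
      ((univ.filter fun x : Fin d → F => dotp x y = a).card : ℝ) = q ^ d / q := by
    intro y hy
    have := card_fiber_dotp y hy a
    have hcast : ((univ.filter fun x : Fin d → F => dotp x y = a).card : ℝ) * q = q ^ d := by
      rw [hqdef]; exact_mod_cast congrArg (Nat.cast : ℕ → ℝ) this
    field_simp at hcast ⊢
    linarith
  -- first moment
  have hA : ∑ x : Fin d → F, f x = (B.card : ℝ) * (q ^ d / q) := by
    have h1 : ∀ x : Fin d → F, f x = ∑ y ∈ B, if dotp x y = a then (1:ℝ) else 0 := by
      intro x; simp [hf, Finset.sum_boole]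
    rw [Finset.sum_congr rfl fun x _ => h1 x, Finset.sum_comm]
    have h2 : ∀ y ∈ B, ∑ x : Fin d → F, (if dotp x y = a then (1:ℝ) else 0) = q ^ d / q := by
      intro y hy
      rw [Finset.sum_boole]
      exact hL1 y (hBy y hy)
    rw [Finset.sum_congr rfl h2, Finset.sum_const, nsmul_eq_mul]
  -- second moment
  have hB2 : ∑ x : Fin d → F, (f x) ^ 2
      ≤ (B.card : ℝ) * (q ^ d / q) + (B.card : ℝ) ^ 2 * (q ^ d / q ^ 2) := by
    have h1 : ∀ x : Fin d → F, (f x) ^ 2 = ∑ y ∈ B, ∑ y' ∈ B,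
        if dotp x y = a ∧ dotp x y' = a then (1:ℝ) else 0 := by
      intro x
      have : f x = ∑ y ∈ B, if dotp x y = a then (1:ℝ) else 0 := by
        simp [hf, Finset.sum_boole]
      rw [this, sq, Finset.sum_mul_sum]
      congr 1; ext y; congr 1; ext y'
      by_cases h1 : dotp x y = a <;> by_cases h2 : dotp x y' = a <;> simp [h1, h2]
    rw [Finset.sum_congr rfl fun x _ => h1 x]
    rw [Finset.sum_comm]
    have swap2 : ∀ y ∈ B, ∑ x : Fin d → F, ∑ y' ∈ B,
          (if dotp x y = a ∧ dotp x y' = a then (1:ℝ) else 0)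
        = ∑ y' ∈ B, ((univ.filter fun x : Fin d → F =>
            dotp x y = a ∧ dotp x y' = a).card : ℝ) := by
      intro y hy
      rw [Finset.sum_comm]
      exact Finset.sum_congr rfl fun y' _ => by rw [Finset.sum_boole]
    rw [Finset.sum_congr rfl swap2]
    have hbound : ∀ y ∈ B, ∑ y' ∈ B, ((univ.filter fun x : Fin d → F =>
            dotp x y = a ∧ dotp x y' = a).card : ℝ)
        ≤ (q ^ d / q) + (B.card : ℝ) * (q ^ d / q ^ 2) := by
      intro y hy
      rw [← Finset.add_sum_erase _ _ hy]
      have hdiag : ((univ.filter fun x : Fin d → F =>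
          dotp x y = a ∧ dotp x y = a).card : ℝ) = q ^ d / q := by
        rw [← hL1 y (hBy y hy)]
        congr 2
        ext x; simp
      rw [hdiag]
      have hoff : ∀ y' ∈ B.erase y, ((univ.filter fun x : Fin d → F =>
          dotp x y = a ∧ dotp x y' = a).card : ℝ) ≤ q ^ d / q ^ 2 := by
        intro y' hy'
        have hne : y ≠ y' := (Finset.ne_of_mem_erase hy').symm
        have := card_fiber_pair y y' (hBy y hy) (hBy y' (Finset.mem_of_mem_erase hy')) hne a ha
        rw [le_div_iff₀ (by positivity)]
        exact this
      have := Finset.sum_le_sum hoff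
      rw [Finset.sum_const, nsmul_eq_mul] at this
      have hce : ((B.erase y).card : ℝ) ≤ (B.card : ℝ) := by
        exact_mod_cast Finset.card_le_card (Finset.erase_subset _ _)
      have hqd : (0:ℝ) ≤ q ^ d / q ^ 2 := by positivity
      nlinarith
    calc ∑ y ∈ B, ∑ y' ∈ B, ((univ.filter fun x : Fin d → F =>
            dotp x y = a ∧ dotp x y' = a).card : ℝ)
        ≤ ∑ _y ∈ B, ((q ^ d / q) + (B.card : ℝ) * (q ^ d / q ^ 2)) :=
          Finset.sum_le_sum hbound
      _ = (B.card : ℝ) * (q ^ d / q) + (B.card : ℝ) ^ 2 * (q ^ d / q ^ 2) := by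
          rw [Finset.sum_const, nsmul_eq_mul]; ring
  -- variance
  set μ : ℝ := (B.card : ℝ) / q with hμ
  have hvar : ∑ x : Fin d → F, (f x - μ) ^ 2 ≤ (B.card : ℝ) * (q ^ d / q) := by
    have expand : ∑ x : Fin d → F, (f x - μ) ^ 2
        = (∑ x : Fin d → F, (f x) ^ 2) - 2 * μ * (∑ x : Fin d → F, f x) + q ^ d * μ ^ 2 := by
      have h1 : ∀ x : Fin d → F, (f x - μ) ^ 2 = (f x) ^ 2 - 2 * μ * f x + μ ^ 2 := by
        intro x; ring
      rw [Finset.sum_congr rfl fun x _ => h1 x, Finset.sum_add_distrib,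
        Finset.sum_sub_distrib, ← Finset.mul_sum, Finset.sum_const, card_univ,
        card_fun_eq, nsmul_eq_mul]
      push_cast
      ring
    rw [expand, hA]
    have : 2 * μ * ((B.card : ℝ) * (q ^ d / q)) - q ^ d * μ ^ 2
        = (B.card : ℝ) ^ 2 * (q ^ d / q ^ 2) := by
      rw [hμ]; field_simp; ring
    linarith
  -- Chebyshev
  set bad := univ.filter fun x : Fin d → F =>
      (B.card : ℝ) > 2 * q * ((B.filter fun y => dotp x y = a).card : ℝ) with hbad
  have hcheb : (bad.card : ℝ) * (μ ^ 2 / 4) ≤ (B.card : ℝ) * (q ^ d / q) := by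
    have hsub : ∑ x ∈ bad, (f x - μ) ^ 2 ≤ ∑ x : Fin d → F, (f x - μ) ^ 2 :=
      Finset.sum_le_sum_of_subset_of_nonneg (Finset.subset_univ _)
        (fun x _ _ => sq_nonneg _)
    have hlow : ∀ x ∈ bad, μ ^ 2 / 4 ≤ (f x - μ) ^ 2 := by
      intro x hx
      rw [hbad, Finset.mem_filter] at hx
      have hfx : f x < μ / 2 := by
        rw [hμ]
        rw [div_div]
        rw [lt_div_iff₀ (by positivity)]
        have := hx.2
        rw [hf]
        nlinarith [hx.2]
      have hfge : (0:ℝ) ≤ f x := by rw [hf]; positivity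
      have hμpos : 0 < μ := by
        rw [hμ]; positivity
      nlinarith
    have := Finset.sum_le_sum hlow
    rw [Finset.sum_const, nsmul_eq_mul] at this
    linarith
  -- conclude
  have hμ2 : μ ^ 2 = (B.card : ℝ) ^ 2 / q ^ 2 := by rw [hμ]; field_simp
  have hBpos : (0:ℝ) < (B.card : ℝ) := by exact_mod_cast hBne
  have key : (bad.card : ℝ) * (B.card : ℝ) * (B.card : ℝ) ≤ 4 * q ^ (d+1) * (B.card : ℝ) := by
    have h4 : (bad.card : ℝ) * ((B.card : ℝ) ^ 2 / q ^ 2) ≤ 4 * ((B.card : ℝ) * (q ^ d / q)) := by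
      rw [← hμ2]; linarith
    have hq2 : (0:ℝ) < q ^ 2 := by positivity
    have h5 : (bad.card : ℝ) * (B.card : ℝ) ^ 2 ≤ 4 * (B.card : ℝ) * q ^ (d+1) := by
      have hmul := mul_le_mul_of_nonneg_right h4 (le_of_lt hq2)
      calc (bad.card : ℝ) * (B.card : ℝ) ^ 2
          = (bad.card : ℝ) * ((B.card : ℝ) ^ 2 / q ^ 2) * q ^ 2 := by field_simp
        _ ≤ 4 * ((B.card : ℝ) * (q ^ d / q)) * q ^ 2 := hmul
        _ = 4 * (B.card : ℝ) * q ^ (d+1) := by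
            rw [pow_succ]; field_simp; ring
    nlinarith [h5]
  calc (bad.card : ℝ) * (B.card : ℝ)
      ≤ 4 * q ^ (d+1) := le_of_mul_le_mul_right (by linarith [key]) hBpos


section tree
variable {V : Type} [Fintype V] {G : SimpleGraph V}

lemma tree_dep_le (hG : G.IsTree) (r v : V) : G.dist r v ≤ Fintype.card V - 1 := by
  obtain ⟨p, hp⟩ := hG.isConnected.exists_walk_length_eq_dist r v
  have hpath := p.isPath_of_length_eq_dist hp
  have := hpath.length_lt
  omega

lemma tree_dep_zero (hG : G.IsTree) {r v : V} (h : G.dist r v = 0) : v = r :=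
  ((hG.isConnected.dist_eq_zero_iff).mp h).symm

lemma tree_adj_dist_succ (hG : G.IsTree) (r : V) {u v : V} (h : G.Adj u v) :
    G.dist r v ≤ G.dist r u + 1 := by
  obtain ⟨p, hp⟩ := hG.isConnected.exists_walk_length_eq_dist r u
  have := SimpleGraph.dist_le (p.concat h)
  rwa [Walk.length_concat, hp] at this

lemma tree_parent (hG : G.IsTree) (r : V) {v : V} (hv : v ≠ r) :
    ∃ u, G.Adj u v ∧ G.dist r u + 1 = G.dist r v := by
  obtain ⟨p, hp⟩ := hG.isConnected.exists_walk_length_eq_dist r v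
  obtain ⟨u, h, q, hq⟩ := Walk.exists_eq_cons_of_ne hv p.reverse
  refine ⟨u, h.symm, ?_⟩
  have hlen : q.length + 1 = G.dist r v := by
    have := congrArg Walk.length hq
    rw [Walk.length_reverse, Walk.length_cons] at this
    omega
  have h1 : G.dist r u ≤ q.length := by
    have := SimpleGraph.dist_le q.reverse
    rwa [Walk.length_reverse] at this
  have h2 := tree_adj_dist_succ hG r h.symm
  omega

lemma tree_parent_unique (hG : G.IsTree) (r : V) {u u' v : V} (hu : G.Adj u v)
    (hu' : G.Adj u' v) (h1 : G.dist r u + 1 = G.dist r v)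
    (h2 : G.dist r u' + 1 = G.dist r v) : u = u' := by
  obtain ⟨p, hp⟩ := hG.isConnected.exists_walk_length_eq_dist r u
  obtain ⟨p', hp'⟩ := hG.isConnected.exists_walk_length_eq_dist r u'
  have hW1 : (p.concat hu).IsPath := by
    apply Walk.isPath_of_length_eq_dist
    rw [Walk.length_concat, hp, h1]
  have hW2 : (p'.concat hu').IsPath := by
    apply Walk.isPath_of_length_eq_dist
    rw [Walk.length_concat, hp', h2]
  obtain ⟨w0, hw0, huniq⟩ := hG.existsUnique_path r v
  have heq : p.concat hu = p'.concat hu' := by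
    rw [huniq _ hW1, huniq _ hW2]
  obtain ⟨hv, -⟩ := Walk.concat_inj heq
  exact hv

lemma tree_adj_dist_ne (hG : G.IsTree) (r : V) {u v : V} (h : G.Adj u v) :
    G.dist r u ≠ G.dist r v := by
  classical
  intro heq
  obtain ⟨p, hp⟩ := hG.isConnected.exists_walk_length_eq_dist r u
  have hppath := p.isPath_of_length_eq_dist hp
  by_cases hjs : v ∈ p.support
  · have htake := p.take_spec hjs
    have hlen : (p.takeUntil v hjs).length + (p.dropUntil v hjs).length = p.length := by
      rw [← Walk.length_append (p.takeUntil v hjs) (p.dropUntil v hjs), htake]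
    have hd : G.dist r v ≤ (p.takeUntil v hjs).length := SimpleGraph.dist_le _
    have hdrop : (p.dropUntil v hjs).length = 0 := by omega
    exact (G.ne_of_adj h).symm (Walk.eq_of_length_eq_zero hdrop)
  · have hWpath : (p.concat h).IsPath := by
      rw [← Walk.isPath_reverse_iff, Walk.reverse_concat, Walk.cons_isPath_iff,
        Walk.isPath_reverse_iff]
      refine ⟨hppath, ?_⟩
      rw [Walk.support_reverse, List.mem_reverse]
      exact hjs
    obtain ⟨p', hp'⟩ := hG.isConnected.exists_walk_length_eq_dist r v
    have hp'path := p'.isPath_of_length_eq_dist hp'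
    obtain ⟨w0, hw0, huniq⟩ := hG.existsUnique_path r v
    have heq2 : p.concat h = p' := by rw [huniq _ hWpath, huniq _ hp'path]
    have := congrArg Walk.length heq2
    rw [Walk.length_concat, hp, hp'] at this
    omega

end tree



attribute [local instance] Classical.propDecidable

noncomputable def Bset {F : Type} [Field F] [Fintype F] {d k : ℕ}
    (G : SimpleGraph (Fin (k+1))) (lab : Fin (k+1) → Fin (k+1) → F)
    (A' : Fin (k+1) → Finset (Fin d → F)) : ℕ → Fin (k+1) → Finset (Fin d → F)
  | 0 => A'
  | (n+1) => fun v => (A' v).filter (fun x => ∀ c, G.Adj v c → G.dist 0 c = G.dist 0 v + 1 →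
      ((Bset G lab A' n c).card : ℝ) ≤ 2 * (Fintype.card F : ℝ)
        * (((Bset G lab A' n c).filter (fun y => dotp x y = lab v c)).card : ℝ))

lemma Bset_subset {F : Type} [Field F] [Fintype F] {d k : ℕ}
    (G : SimpleGraph (Fin (k+1))) (lab : Fin (k+1) → Fin (k+1) → F)
    (A' : Fin (k+1) → Finset (Fin d → F)) (n : ℕ) (v : Fin (k+1)) :
    Bset G lab A' n v ⊆ A' v := by
  cases n with
  | zero => exact Finset.Subset.refl _
  | succ n => exact Finset.filter_subset _ _

lemma Bhalf {F : Type} [Field F] [Fintype F] {d k : ℕ}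
    (G : SimpleGraph (Fin (k+1))) (lab : Fin (k+1) → Fin (k+1) → F)
    (hlab : ∀ i j, G.Adj i j → lab i j ≠ 0)
    (A' : Fin (k+1) → Finset (Fin d → F)) (h0 : ∀ v, (0 : Fin d → F) ∉ A' v)
    (hvert : ∀ v, 32 * (k+1 : ℝ) * (Fintype.card F : ℝ) ≤ ((A' v).card : ℝ))
    (hsize : ∀ i j, G.Adj i j →
      32 * (k+1 : ℝ) * (Fintype.card F : ℝ) ^ (d+1) ≤ ((A' i).card : ℝ) * ((A' j).card : ℝ)) :
    ∀ n v, ((A' v).card : ℝ) ≤ 2 * ((Bset G lab A' n v).card : ℝ) := by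
  have hq1 : (1:ℝ) ≤ (Fintype.card F : ℝ) := by exact_mod_cast Fintype.card_pos
  have hApos : ∀ v, (0:ℝ) < ((A' v).card : ℝ) := by
    intro v
    have := hvert v
    have hk0 : (0:ℝ) ≤ (k:ℝ) := Nat.cast_nonneg k
    nlinarith
  intro n
  induction n with
  | zero =>
    intro v
    simp only [Bset]
    linarith [hApos v]
  | succ n ih =>
    intro v
    -- the bad set for each child
    set q : ℝ := (Fintype.card F : ℝ) with hqdef
    have hqpos : (0:ℝ) < q := by linarith
    set badc : Fin (k+1) → Finset (Fin d → F) := fun c =>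
      univ.filter fun x : Fin d → F =>
        ((Bset G lab A' n c).card : ℝ) > 2 * q
          * (((Bset G lab A' n c).filter fun y => dotp x y = lab v c).card : ℝ) with hbadc
    have hchild : ∀ c, G.Adj v c → G.dist 0 c = G.dist 0 v + 1 →
        ((badc c).card : ℝ) * 4 * (k+1 : ℝ) ≤ ((A' v).card : ℝ) := by
      intro c hadj hdep
      have hBc := ih c
      have hBcpos : 0 < (Bset G lab A' n c).card := by
        by_contra hc
        push_neg at hc
        have hzero : (Bset G lab A' n c).card = 0 := Nat.le_zero.mp hc
        rw [hzero] at hBc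
        norm_num at hBc
        have hA := hApos c
        rw [hBc] at hA
        simp at hA
      have hcheb := cheby (Bset G lab A' n c)
        (fun hmem => h0 c (Bset_subset G lab A' n c hmem))
        hBcpos (lab v c) (hlab v c hadj)
      -- t * Bc ≤ 4 q^{d+1},  A'c ≤ 2 Bc,  A'v * A'c ≥ 32(k+1) q^{d+1}
      have hsz := hsize v c hadj
      set t : ℝ := ((badc c).card : ℝ) with ht
      have htnn : (0:ℝ) ≤ t := by positivity
      have hqd : (0:ℝ) < q ^ (d+1) := by positivity
      -- t * A'c ≤ 2 * (t * Bc) ≤ 8 q^{d+1} ≤ A'v A'c / (4(k+1))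
      have h1 : t * ((A' c).card : ℝ) ≤ 8 * q ^ (d+1) := by nlinarith [hcheb]
      have h2 : 8 * q ^ (d+1) * (4 * (k+1:ℝ)) ≤ ((A' v).card : ℝ) * ((A' c).card : ℝ) := by
        nlinarith
      have := hApos c
      nlinarith
    -- decomposition
    have hsplit := Finset.card_filter_add_card_filter_not
      (s := A' v) (p := fun x => ∀ c, G.Adj v c → G.dist 0 c = G.dist 0 v + 1 →
        ((Bset G lab A' n c).card : ℝ) ≤ 2 * (Fintype.card F : ℝ)
          * (((Bset G lab A' n c).filter fun y => dotp x y = lab v c).card : ℝ))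
    have hBadsub : (A' v).filter (fun x => ¬ (∀ c, G.Adj v c → G.dist 0 c = G.dist 0 v + 1 →
          ((Bset G lab A' n c).card : ℝ) ≤ 2 * (Fintype.card F : ℝ)
            * (((Bset G lab A' n c).filter fun y => dotp x y = lab v c).card : ℝ)))
        ⊆ (univ.filter fun c => G.Adj v c ∧ G.dist 0 c = G.dist 0 v + 1).biUnion badc := by
      intro x hx
      rw [Finset.mem_filter] at hx
      obtain ⟨-, hx⟩ := hx
      push_neg at hx
      obtain ⟨c, hadj, hdep, hlt⟩ := hx
      rw [Finset.mem_biUnion]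
      refine ⟨c, ?_, ?_⟩
      · simp [hadj, hdep]
      · simp only [hbadc, Finset.mem_filter, Finset.mem_univ, true_and, gt_iff_lt, hqdef]
        exact_mod_cast hlt
    have hbadcard : (((A' v).filter (fun x => ¬ (∀ c, G.Adj v c → G.dist 0 c = G.dist 0 v + 1 →
          ((Bset G lab A' n c).card : ℝ) ≤ 2 * (Fintype.card F : ℝ)
            * (((Bset G lab A' n c).filter fun y => dotp x y = lab v c).card : ℝ)))).card : ℝ)
        ≤ ((A' v).card : ℝ) / 4 := by
      have h1 : ((A' v).filter _).card
          ≤ ∑ c ∈ (univ.filter fun c => G.Adj v c ∧ G.dist 0 c = G.dist 0 v + 1), (badc c).card :=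
        le_trans (Finset.card_le_card hBadsub) (Finset.card_biUnion_le)
      have h2 : (∑ c ∈ (univ.filter fun c => G.Adj v c ∧ G.dist 0 c = G.dist 0 v + 1),
          ((badc c).card : ℝ)) ≤ ∑ _c ∈ (univ.filter fun c => G.Adj v c ∧ G.dist 0 c = G.dist 0 v + 1),
            ((A' v).card : ℝ) / (4 * (k+1:ℝ)) := by
        apply Finset.sum_le_sum
        intro c hc
        rw [Finset.mem_filter] at hc
        have := hchild c hc.2.1 hc.2.2
        rw [le_div_iff₀ (by positivity)]
        linarith
      have h3 : (((univ.filter fun c => G.Adj v c ∧ G.dist 0 c = G.dist 0 v + 1)).card : ℝ)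
          ≤ (k+1 : ℝ) := by
        have := Finset.card_filter_le (univ : Finset (Fin (k+1)))
          (fun c => G.Adj v c ∧ G.dist 0 c = G.dist 0 v + 1)
        rw [Finset.card_univ, Fintype.card_fin] at this
        exact_mod_cast this
      rw [Finset.sum_const, nsmul_eq_mul] at h2
      have h4 : (((A' v).filter (fun x => ¬ (∀ c, G.Adj v c → G.dist 0 c = G.dist 0 v + 1 →
          ((Bset G lab A' n c).card : ℝ) ≤ 2 * (Fintype.card F : ℝ)
            * (((Bset G lab A' n c).filter fun y => dotp x y = lab v c).card : ℝ)))).card : ℝ)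
          ≤ ∑ c ∈ (univ.filter fun c => G.Adj v c ∧ G.dist 0 c = G.dist 0 v + 1),
            ((badc c).card : ℝ) := by exact_mod_cast h1
      have hApv := hApos v
      have hk1 : (0:ℝ) < 4 * (k+1:ℝ) := by positivity
      calc (((A' v).filter _).card : ℝ) ≤ _ := h4
        _ ≤ _ := h2
        _ ≤ (k+1:ℝ) * (((A' v).card : ℝ) / (4 * (k+1:ℝ))) := by
            apply mul_le_mul_of_nonneg_right h3
            positivity
        _ = ((A' v).card : ℝ) / 4 := by field_simp
    -- conclude
    have hcast : ((A' v).card : ℝ)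
        = ((Bset G lab A' (n+1) v).card : ℝ)
          + (((A' v).filter (fun x => ¬ (∀ c, G.Adj v c → G.dist 0 c = G.dist 0 v + 1 →
            ((Bset G lab A' n c).card : ℝ) ≤ 2 * (Fintype.card F : ℝ)
              * (((Bset G lab A' n c).filter fun y => dotp x y = lab v c).card : ℝ)))).card : ℝ) := by
      have hc2 := congrArg (Nat.cast : ℕ → ℝ) hsplit.symm
      rw [Nat.cast_add] at hc2
      exact hc2
    linarith



attribute [local instance] Classical.propDecidable

noncomputable def xfun {F : Type} [Field F] [Fintype F] {d k : ℕ}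
    (G : SimpleGraph (Fin (k+1))) (lab : Fin (k+1) → Fin (k+1) → F)
    (A' : Fin (k+1) → Finset (Fin d → F)) (par : Fin (k+1) → Fin (k+1)) :
    ℕ → Fin (k+1) → (Fin d → F)
  | 0 => fun _ => 0
  | (n+1) => fun v =>
      if _hv : v = 0 then
        (if h : (Bset G lab A' k 0).Nonempty then h.choose else 0)
      else
        (if h : ((Bset G lab A' (k - G.dist 0 v) v).filter
            (fun y => dotp (xfun G lab A' par n (par v)) y = lab (par v) v)).Nonempty
        then h.choose else 0)

lemma xfun_succ {F : Type} [Field F] [Fintype F] {d k : ℕ}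
    (G : SimpleGraph (Fin (k+1))) (lab : Fin (k+1) → Fin (k+1) → F)
    (A' : Fin (k+1) → Finset (Fin d → F)) (par : Fin (k+1) → Fin (k+1))
    (n : ℕ) (v : Fin (k+1)) :
    xfun G lab A' par (n+1) v =
      if _hv : v = 0 then
        (if h : (Bset G lab A' k 0).Nonempty then h.choose else 0)
      else
        (if h : ((Bset G lab A' (k - G.dist 0 v) v).filter
            (fun y => dotp (xfun G lab A' par n (par v)) y = lab (par v) v)).Nonempty
        then h.choose else 0) := rfl

lemma xfun_stab {F : Type} [Field F] [Fintype F] {d k : ℕ}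
    (G : SimpleGraph (Fin (k+1))) (lab : Fin (k+1) → Fin (k+1) → F)
    (A' : Fin (k+1) → Finset (Fin d → F)) (par : Fin (k+1) → Fin (k+1))
    (hpar : ∀ v : Fin (k+1), v ≠ 0 → G.dist 0 (par v) + 1 = G.dist 0 v) :
    ∀ n v, G.dist 0 v < n → xfun G lab A' par (n+1) v = xfun G lab A' par n v := by
  intro n
  induction n with
  | zero => intro v h; omega
  | succ n ih =>
    intro v h
    by_cases hv : v = 0
    · subst hv
      rw [xfun_succ G lab A' par (n+1) 0, xfun_succ G lab A' par n 0, dif_pos rfl, dif_pos rfl]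
    · have hd : G.dist 0 (par v) < n := by
        have := hpar v hv
        have hvd : G.dist 0 v ≠ 0 := by
          intro h0
          omega
        omega
      have hrec := ih (par v) hd
      rw [xfun_succ G lab A' par (n+1) v, xfun_succ G lab A' par n v, dif_neg hv, dif_neg hv]
      simp only [hrec]

lemma xfun_stab' {F : Type} [Field F] [Fintype F] {d k : ℕ}
    (G : SimpleGraph (Fin (k+1))) (lab : Fin (k+1) → Fin (k+1) → F)
    (A' : Fin (k+1) → Finset (Fin d → F)) (par : Fin (k+1) → Fin (k+1))
    (hpar : ∀ v : Fin (k+1), v ≠ 0 → G.dist 0 (par v) + 1 = G.dist 0 v)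
    (m : ℕ) : ∀ n v, m ≤ n → G.dist 0 v < m → xfun G lab A' par n v = xfun G lab A' par m v := by
  intro n
  induction n with
  | zero => intro v hmn h; exact absurd h (by omega)
  | succ n ih =>
    intro v hmn h
    rcases Nat.eq_or_lt_of_le hmn with heq|hlt
    · rw [heq]
    · have hmn' : m ≤ n := by omega
      rw [xfun_stab G lab A' par hpar n v (by omega)]
      exact ih v hmn' h

lemma engine {F : Type} [Field F] [Fintype F] {d k : ℕ}
    (G : SimpleGraph (Fin (k+1))) (hG : G.IsTree)
    (lab : Fin (k+1) → Fin (k+1) → F) (hlab : ∀ i j, G.Adj i j → lab i j ≠ 0)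
    (hsymm : ∀ i j, lab i j = lab j i)
    (A' : Fin (k+1) → Finset (Fin d → F)) (h0 : ∀ v, (0 : Fin d → F) ∉ A' v)
    (hvert : ∀ v, 32 * (k+1 : ℝ) * (Fintype.card F : ℝ) ≤ ((A' v).card : ℝ))
    (hsize : ∀ i j, G.Adj i j →
      32 * (k+1 : ℝ) * (Fintype.card F : ℝ) ^ (d+1) ≤ ((A' i).card : ℝ) * ((A' j).card : ℝ)) :
    ∃ x : Fin (k+1) → Fin d → F, (∀ v, x v ∈ A' v) ∧
      ∀ i j, G.Adj i j → dotp (x i) (x j) = lab i j := by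
  classical
  have hBhalf := Bhalf G lab hlab A' h0 hvert hsize
  have hq1 : (1:ℝ) ≤ (Fintype.card F : ℝ) := by exact_mod_cast Fintype.card_pos
  have hApos : ∀ v, (0:ℝ) < ((A' v).card : ℝ) := by
    intro v
    have := hvert v
    have hk0 : (0:ℝ) ≤ (k:ℝ) := Nat.cast_nonneg k
    nlinarith
  have hBpos : ∀ n v, 0 < (Bset G lab A' n v).card := by
    intro n v
    by_contra hc
    push_neg at hc
    have hzero : (Bset G lab A' n v).card = 0 := Nat.le_zero.mp hc
    have := hBhalf n v
    rw [hzero] at this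
    norm_num at this
    have hA := hApos v
    rw [this] at hA
    simp at hA
  have hex : ∀ v : Fin (k+1), v ≠ 0 → ∃ u, G.Adj u v ∧ G.dist 0 u + 1 = G.dist 0 v :=
    fun v hv => tree_parent hG 0 hv
  set par : Fin (k+1) → Fin (k+1) := fun v => if h : v = 0 then 0 else (hex v h).choose
    with hpardef
  have hparadj : ∀ v : Fin (k+1), v ≠ 0 → G.Adj (par v) v := by
    intro v hv
    simp only [hpardef, dif_neg hv]
    exact ((hex v hv).choose_spec).1
  have hpardist : ∀ v : Fin (k+1), v ≠ 0 → G.dist 0 (par v) + 1 = G.dist 0 v := by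
    intro v hv
    simp only [hpardef, dif_neg hv]
    exact ((hex v hv).choose_spec).2
  have hdepk : ∀ v : Fin (k+1), G.dist 0 v ≤ k := by
    intro v
    have := tree_dep_le hG 0 v
    rwa [Fintype.card_fin] at this
  set x : Fin (k+1) → Fin d → F := fun v => xfun G lab A' par (k+1) v with hx
  have key : ∀ n : ℕ, ∀ v : Fin (k+1), G.dist 0 v = n →
      x v ∈ Bset G lab A' (k - n) v ∧
        (v ≠ 0 → dotp (x (par v)) (x v) = lab (par v) v) := by
    intro n
    induction n using Nat.strong_induction_on with
    | _ n ih =>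
      intro v hdist
      have hxv : x v = xfun G lab A' par (n+1) v := by
        rw [hx]
        exact xfun_stab' G lab A' par hpardist (n+1) (k+1) v
          (by have := hdepk v; omega) (by omega)
      by_cases hv : v = 0
      · subst hv
        have hn0 : n = 0 := by rw [← hdist]; exact SimpleGraph.dist_self
        subst hn0
        have hne : (Bset G lab A' k 0).Nonempty := Finset.card_pos.mp (hBpos k 0)
        constructor
        · rw [hxv]
          rw [xfun_succ G lab A' par 0 0, dif_pos rfl, dif_pos hne]
          simpa using hne.choose_spec
        · intro h; exact absurd rfl h
      · have hn1 : 1 ≤ n := by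
          rcases Nat.eq_zero_or_pos n with h|h
          · exact absurd (tree_dep_zero hG (h ▸ hdist)) hv
          · exact h
        have hdp : G.dist 0 (par v) = n - 1 := by
          have := hpardist v hv
          omega
        have hkn : k - (n - 1) = (k - n) + 1 := by
          have := hdepk v
          omega
        have ihp := ih (n-1) (by omega) (par v) hdp
        rw [hkn] at ihp
        obtain ⟨hmem, -⟩ := ihp
        simp only [Bset, Finset.mem_filter] at hmem
        obtain ⟨-, hcond⟩ := hmem
        have hcv := hcond v (hparadj v hv) (by rw [hdist, hdp]; omega)
        have hfpos : ((Bset G lab A' (k-n) v).filter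
            (fun y => dotp (x (par v)) y = lab (par v) v)).Nonempty := by
          rcases Finset.eq_empty_or_nonempty ((Bset G lab A' (k-n) v).filter
            (fun y => dotp (x (par v)) y = lab (par v) v)) with he|hne
          · exfalso
            rw [he] at hcv
            simp at hcv
            have hb : (0:ℝ) < ((Bset G lab A' (k-n) v).card : ℝ) := by
              exact_mod_cast hBpos (k-n) v
            rw [hcv] at hb
            simp at hb
          · exact hne
        have hxpar : xfun G lab A' par n (par v) = x (par v) := by
          rw [hx]
          exact (xfun_stab' G lab A' par hpardist n (k+1) (par v)
            (by have := hdepk v; omega) (by omega)).symm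
        rw [hxv, xfun_succ G lab A' par n v, dif_neg hv]
        simp only [hxpar, hdist]
        rw [dif_pos hfpos]
        have hc := hfpos.choose_spec
        rw [Finset.mem_filter] at hc
        exact ⟨hc.1, fun _ => hc.2⟩
  refine ⟨x, ?_, ?_⟩
  · intro v
    exact Bset_subset G lab A' _ v (key (G.dist 0 v) v rfl).1
  · intro i j hadj
    have hne := tree_adj_dist_ne hG 0 hadj
    have h1 := tree_adj_dist_succ hG 0 hadj
    have h2 := tree_adj_dist_succ hG 0 hadj.symm
    rcases (by omega : G.dist 0 j = G.dist 0 i + 1 ∨ G.dist 0 i = G.dist 0 j + 1) with hc|hc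
    · have hj0 : j ≠ 0 := by
        intro h
        subst h
        rw [SimpleGraph.dist_self] at hc
        omega
      have hpj : par j = i := tree_parent_unique hG 0 (hparadj j hj0) hadj
        (hpardist j hj0) (by omega)
      have hkey := (key (G.dist 0 j) j rfl).2 hj0
      rw [hpj] at hkey
      exact hkey
    · have hi0 : i ≠ 0 := by
        intro h
        subst h
        rw [SimpleGraph.dist_self] at hc
        omega
      have hpi : par i = j := tree_parent_unique hG 0 (hparadj i hi0) hadj.symm
        (hpardist i hi0) (by omega)
      have hkey := (key (G.dist 0 i) i rfl).2 hi0
      rw [hpi] at hkey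
      rw [dotp_comm (x i) (x j), hkey]
      exact hsymm j i



/-- If `G` is a tree on `k+1` vertices (`d ≥ 1`, `k ≥ 2`) and
`|A_i||A_j| ≥ C q^{d+k-1}` for every edge `{v_i,v_j}`, then every function
`α : E → 𝔽_q^*` is attained, i.e. `Π_G(A_1 × ⋯ × A_{k+1}) ⊇ (𝔽_q^*)^k`;
here `C` depends only on `k`. -/
theorem stmt2 (k : ℕ) (hk : 2 ≤ k) :
    ∃ C : ℝ, 0 < C ∧
      ∀ (F : Type) [Field F] [Fintype F] (d : ℕ), 1 ≤ d →
      ∀ (G : SimpleGraph (Fin (k + 1))), G.IsTree →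
      ∀ A : Fin (k + 1) → Finset (Fin d → F),
        (∀ i j, G.Adj i j →
          C * (Fintype.card F : ℝ) ^ (d + k - 1) ≤ ((A i).card : ℝ) * ((A j).card : ℝ)) →
        ∀ α : G.edgeSet → F, (∀ e, α e ≠ 0) →
          ∃ x : Fin (k + 1) → Fin d → F, (∀ i, x i ∈ A i) ∧
            ∀ i j, ∀ h : G.Adj i j,
              dotp (x i) (x j) = α ⟨s(i, j), G.mem_edgeSet.mpr h⟩ := by
  classical
  refine ⟨128 * (k + 1 : ℝ), by positivity, ?_⟩
  intro F _ _ d hd G hG A hA α hα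
  have hk0 : (0:ℝ) ≤ (k:ℝ) := Nat.cast_nonneg k
  have hq2 : (2:ℝ) ≤ (Fintype.card F : ℝ) := by exact_mod_cast Fintype.one_lt_card (α := F)
  have hq1 : (1:ℝ) ≤ (Fintype.card F : ℝ) := by linarith
  have hq0 : (0:ℝ) < (Fintype.card F : ℝ) := by linarith
  set lab : Fin (k+1) → Fin (k+1) → F := fun i j =>
    if h : G.Adj i j then α ⟨s(i,j), G.mem_edgeSet.mpr h⟩ else 0 with hlabdef
  have hlab : ∀ i j, G.Adj i j → lab i j ≠ 0 := by
    intro i j h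
    simp only [hlabdef, dif_pos h]
    exact hα _
  have hlabsymm : ∀ i j, lab i j = lab j i := by
    intro i j
    by_cases h : G.Adj i j
    · simp only [hlabdef, dif_pos h, dif_pos h.symm]
      congr 1
      exact Subtype.ext (Sym2.eq_swap)
    · simp only [hlabdef, dif_neg h, dif_neg (fun h' : G.Adj j i => h h'.symm)]
  have hnbr : ∀ i : Fin (k+1), ∃ j, G.Adj i j := by
    intro i
    have h2 : 1 < Fintype.card (Fin (k+1)) := by rw [Fintype.card_fin]; omega
    obtain ⟨j, hj⟩ := Fintype.exists_ne_of_one_lt_card h2 i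
    obtain ⟨p⟩ := hG.isConnected i j
    obtain ⟨u, hadj, p', -⟩ := Walk.exists_eq_cons_of_ne (Ne.symm hj) p
    exact ⟨u, hadj⟩
  have hcardle : ∀ i : Fin (k+1), ((A i).card : ℝ) ≤ (Fintype.card F : ℝ) ^ d := by
    intro i
    have h1 := Finset.card_le_univ (A i)
    rw [card_fun_eq] at h1
    exact_mod_cast h1
  have hpow : (Fintype.card F : ℝ) ^ (d+1) ≤ (Fintype.card F : ℝ) ^ (d + k - 1) :=
    pow_le_pow_right₀ hq1 (by omega)
  have hAbig : ∀ i j, G.Adj i j →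
      128 * (k+1:ℝ) * (Fintype.card F : ℝ) ^ (d+1) ≤ ((A i).card : ℝ) * ((A j).card : ℝ) := by
    intro i j h
    calc 128 * (k+1:ℝ) * (Fintype.card F : ℝ) ^ (d+1)
        ≤ 128 * (k+1:ℝ) * (Fintype.card F : ℝ) ^ (d + k - 1) := by
          apply mul_le_mul_of_nonneg_left hpow
          positivity
      _ ≤ _ := hA i j h
  have hAvert : ∀ i : Fin (k+1), 128 * (k+1:ℝ) * (Fintype.card F : ℝ) ≤ ((A i).card : ℝ) := by
    intro i
    obtain ⟨j, hj⟩ := hnbr i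
    have h1 := hAbig i j hj
    have h2 := hcardle j
    have hqd : (0:ℝ) < (Fintype.card F : ℝ) ^ d := by positivity
    have hAin : (0:ℝ) ≤ ((A i).card : ℝ) := Nat.cast_nonneg _
    have hAjn : (0:ℝ) ≤ ((A j).card : ℝ) := Nat.cast_nonneg _
    have hps : (Fintype.card F : ℝ) ^ (d+1) = (Fintype.card F : ℝ) ^ d * (Fintype.card F : ℝ) :=
      pow_succ _ _
    nlinarith [mul_le_mul_of_nonneg_left h2 hAin]
  set A' : Fin (k+1) → Finset (Fin d → F) := fun i => (A i).erase 0 with hA'def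
  have h0 : ∀ v, (0 : Fin d → F) ∉ A' v := fun v => Finset.notMem_erase _ _
  have hsub : ∀ v, A' v ⊆ A v := fun v => Finset.erase_subset _ _
  have hhalf : ∀ v, ((A v).card : ℝ) ≤ 2 * ((A' v).card : ℝ) := by
    intro v
    have h3 : A' v = (A v).erase 0 := by rw [hA'def]
    rw [h3]
    have hpred := Finset.pred_card_le_card_erase (s := A v) (a := 0)
    have h2 : (A v).card ≤ ((A v).erase 0).card + 1 := by omega
    have hc : ((A v).card : ℝ) ≤ (((A v).erase 0).card : ℝ) + 1 := by exact_mod_cast h2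
    have hv := hAvert v
    nlinarith
  have hvert' : ∀ v, 32 * (k+1:ℝ) * (Fintype.card F : ℝ) ≤ ((A' v).card : ℝ) := by
    intro v
    have h1 := hAvert v
    have h2 := hhalf v
    nlinarith
  have hsize' : ∀ i j, G.Adj i j →
      32 * (k+1:ℝ) * (Fintype.card F : ℝ) ^ (d+1) ≤ ((A' i).card : ℝ) * ((A' j).card : ℝ) := by
    intro i j h
    have h1 := hAbig i j h
    have h2 := hhalf i
    have h3 := hhalf j
    have hAin : (0:ℝ) ≤ ((A i).card : ℝ) := Nat.cast_nonneg _
    have hA'jn : (0:ℝ) ≤ ((A' j).card : ℝ) := Nat.cast_nonneg _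
    have hA'in : (0:ℝ) ≤ 2 * ((A' i).card : ℝ) := by
      have : (0:ℝ) ≤ ((A' i).card : ℝ) := Nat.cast_nonneg _
      linarith
    have hmul : ((A i).card : ℝ) * ((A j).card : ℝ)
        ≤ (2 * ((A' i).card : ℝ)) * (2 * ((A' j).card : ℝ)) :=
      mul_le_mul h2 h3 (Nat.cast_nonneg _) hA'in
    linarith
  obtain ⟨x, hxmem, hxdot⟩ := engine G hG lab hlab hlabsymm A' h0 hvert' hsize'
  refine ⟨x, fun i => hsub i (hxmem i), ?_⟩
  intro i j h
  have hres := hxdot i j h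
  simp only [hlabdef, dif_pos h] at hres
  exact hres
end cheby
end

section
/- Let q be a prime power, d ≥ 1 an integer, and A, A_1 ⊆ 𝔽_q^d. Then ∑_{t_1 ∈ 𝔽_q} ∑_{x_1 ∈ A_1} (Π^A_{x_1}(t_1))^2 ≤ q^{-1}·|A|^2·|A_1| + q^d·|A|. -/
section Aux
variable {F : Type} [Field F] [Fintype F] [DecidableEq F] {d : ℕ}

omit [Fintype F] [DecidableEq F] in
lemma aux_dotp_add_single (x v : Fin d → F) (i : Fin d) (s : F) :
    dotp (x + Pi.single i s) v = dotp x v + s * v i := by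
  classical
  unfold dotp
  simp only [Pi.add_apply, add_mul, Finset.sum_add_distrib]
  congr 1
  rw [Fintype.sum_eq_single i (fun j hj => by rw [Pi.single_eq_of_ne hj, zero_mul]),
    Pi.single_eq_same]

omit [Fintype F] [DecidableEq F] in
lemma aux_dotp_sub (x y z : Fin d → F) : dotp x (z - y) = dotp x z - dotp x y := by
  unfold dotp
  simp [mul_sub, Finset.sum_sub_distrib]

lemma aux_hyperplane_card (v : Fin d → F) (hv : v ≠ 0) :
    (Finset.univ.filter fun x : Fin d → F => dotp x v = 0).card
      = Fintype.card F ^ (d - 1) := by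
  obtain ⟨i, hvi⟩ := Function.ne_iff.mp hv
  simp only [Pi.zero_apply] at hvi
  have key : ∀ t : F, (Finset.univ.filter fun x : Fin d → F => dotp x v = t).card
      = (Finset.univ.filter fun x : Fin d → F => dotp x v = 0).card := by
    intro t
    apply Finset.card_bij' (fun x _ => x + Pi.single i (-t * (v i)⁻¹))
      (fun x _ => x + Pi.single i (t * (v i)⁻¹))
    · intro a ha
      rw [add_assoc, ← Pi.single_add]
      have h : -t * (v i)⁻¹ + t * (v i)⁻¹ = 0 := by ring
      rw [h, Pi.single_zero, add_zero]
    · intro a ha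
      rw [add_assoc, ← Pi.single_add]
      have h : t * (v i)⁻¹ + -t * (v i)⁻¹ = 0 := by ring
      rw [h, Pi.single_zero, add_zero]
    · intro a ha
      simp only [Finset.mem_filter, Finset.mem_univ, true_and] at ha ⊢
      rw [aux_dotp_add_single, ha]
      field_simp
      ring
    · intro a ha
      simp only [Finset.mem_filter, Finset.mem_univ, true_and] at ha ⊢
      rw [aux_dotp_add_single, ha]
      field_simp
      ring
  have hsum : ∑ t : F, (Finset.univ.filter fun x : Fin d → F => dotp x v = t).card
      = Fintype.card F ^ d := by
    rw [← Finset.card_eq_sum_card_fiberwise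
      (f := fun x : Fin d → F => dotp x v) (t := Finset.univ) (fun x _ => Finset.mem_univ _)]
    simp
  simp only [key, Finset.sum_const, Finset.card_univ, smul_eq_mul] at hsum
  have hq : 0 < Fintype.card F := Fintype.card_pos
  have hd1 : 1 ≤ d := by
    by_contra h
    interval_cases d
    exact hv (Subsingleton.elim _ _)
  have h2 : Fintype.card F * (Finset.univ.filter fun x : Fin d → F => dotp x v = 0).card
      = Fintype.card F * Fintype.card F ^ (d - 1) := by
    rw [hsum, ← pow_succ']
    congr 1
    omega
  exact Nat.eq_of_mul_eq_mul_left hq h2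

lemma aux_expand (A : Finset (Fin d → F)) (x : Fin d → F) :
    ∑ t : F, ((A.filter fun y => dotp x y = t).card : ℝ) ^ 2
      = ∑ y ∈ A, ∑ z ∈ A, (if dotp x z = dotp x y then (1:ℝ) else 0) := by
  have hcard : ∀ t : F, ((A.filter fun y => dotp x y = t).card : ℝ)
      = ∑ y ∈ A, (if dotp x y = t then (1:ℝ) else 0) := by
    intro t
    rw [Finset.card_filter]
    push_cast
    rfl
  calc ∑ t : F, ((A.filter fun y => dotp x y = t).card : ℝ) ^ 2
      = ∑ t : F, ∑ y ∈ A, ∑ z ∈ A,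
          (if dotp x y = t then (1:ℝ) else 0) * (if dotp x z = t then (1:ℝ) else 0) := by
        simp_rw [hcard, sq, Finset.sum_mul_sum]
    _ = ∑ y ∈ A, ∑ z ∈ A, ∑ t : F,
          (if dotp x y = t then (if dotp x z = t then (1:ℝ) else 0) else 0) := by
        rw [Finset.sum_comm]
        congr 1; ext y
        rw [Finset.sum_comm]
        congr 1; ext z
        congr 1; ext t
        rw [ite_mul, one_mul, zero_mul]
    _ = ∑ y ∈ A, ∑ z ∈ A, (if dotp x z = dotp x y then (1:ℝ) else 0) := by
        congr 1; ext y; congr 1; ext z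
        rw [Finset.sum_ite_eq]
        simp

lemma aux_sum_fiber (A : Finset (Fin d → F)) (x : Fin d → F) :
    ∑ t : F, ((A.filter fun y => dotp x y = t).card : ℝ) = A.card := by
  rw [← Nat.cast_sum]
  norm_cast
  exact (Finset.card_eq_sum_card_fiberwise
    (f := fun y => dotp x y) (t := Finset.univ) (fun y _ => Finset.mem_univ _)).symm

lemma aux_global (A : Finset (Fin d → F)) (hd : 1 ≤ d) :
    ∑ x : Fin d → F, ∑ t : F, ((A.filter fun y => dotp x y = t).card : ℝ) ^ 2
      ≤ (Fintype.card F : ℝ) ^ d * A.card + (Fintype.card F : ℝ) ^ (d - 1) * A.card ^ 2 := by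
  set q : ℝ := (Fintype.card F : ℝ) with hq
  have hq0 : (0:ℝ) < q := by positivity -- wrong? card could be...
  calc ∑ x : Fin d → F, ∑ t : F, ((A.filter fun y => dotp x y = t).card : ℝ) ^ 2
      = ∑ x : Fin d → F, ∑ y ∈ A, ∑ z ∈ A, (if dotp x z = dotp x y then (1:ℝ) else 0) := by
        exact Finset.sum_congr rfl fun x _ => aux_expand A x
    _ = ∑ y ∈ A, ∑ z ∈ A, ∑ x : Fin d → F, (if dotp x z = dotp x y then (1:ℝ) else 0) := by
        rw [Finset.sum_comm]
        congr 1; ext y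
        rw [Finset.sum_comm]
    _ ≤ ∑ y ∈ A, ∑ z ∈ A, (if y = z then q ^ d else q ^ (d - 1)) := by
        apply Finset.sum_le_sum; intro y hy
        apply Finset.sum_le_sum; intro z hz
        rw [Finset.sum_boole]
        by_cases hyz : y = z
        · simp only [hyz, if_pos rfl]
          apply le_of_eq
          norm_cast
          simp [Finset.filter_true_of_mem, Finset.card_univ]
          rfl
        · rw [if_neg hyz]
          have hfil : (Finset.univ.filter fun x : Fin d → F => dotp x z = dotp x y)
              = Finset.univ.filter fun x : Fin d → F => dotp x (z - y) = 0 := by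
            apply Finset.filter_congr
            intro x _
            rw [aux_dotp_sub, sub_eq_zero]
          rw [hfil, aux_hyperplane_card (z - y) (sub_ne_zero.mpr fun h => hyz (h.symm)), hq]
          push_cast
          exact le_refl _
    _ ≤ ∑ y ∈ A, (q ^ d + A.card * q ^ (d - 1)) := by
        apply Finset.sum_le_sum; intro y hy
        calc ∑ z ∈ A, (if y = z then q ^ d else q ^ (d - 1))
            ≤ ∑ z ∈ A, ((if y = z then q ^ d else 0) + q ^ (d - 1)) := by
              apply Finset.sum_le_sum; intro z hz
              by_cases h : y = z <;> simp [h] <;> positivity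
          _ = (if y ∈ A then q ^ d else 0) + A.card * q ^ (d - 1) := by
              rw [Finset.sum_add_distrib, Finset.sum_ite_eq, Finset.sum_const, nsmul_eq_mul]
          _ ≤ q ^ d + A.card * q ^ (d - 1) := by
              apply add_le_add_left
              by_cases h : y ∈ A <;> simp [h] <;> positivity
    _ = A.card * (q ^ d + A.card * q ^ (d - 1)) := by
        rw [Finset.sum_const, nsmul_eq_mul]
    _ = q ^ d * A.card + q ^ (d - 1) * A.card ^ 2 := by ring

end Aux

/-- For `A, A_1 ⊆ 𝔽_q^d`,
`∑_{t_1 ∈ 𝔽_q} ∑_{x_1 ∈ A_1} (Π^A_{x_1}(t_1))^2 ≤ q^{-1} |A|^2 |A_1| + q^d |A|`. -/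
theorem stmt7 (F : Type) [Field F] [Fintype F] [DecidableEq F] (d : ℕ) (hd : 1 ≤ d)
    (A A₁ : Finset (Fin d → F)) :
    ∑ t₁ : F, ∑ x₁ ∈ A₁, (((A.filter fun y => dotp x₁ y = t₁).card : ℝ)) ^ 2 ≤
      (Fintype.card F : ℝ)⁻¹ * (A.card : ℝ) ^ 2 * (A₁.card : ℝ) +
        (Fintype.card F : ℝ) ^ d * (A.card : ℝ) := by
  set q : ℝ := (Fintype.card F : ℝ) with hqdef
  have hq0 : (0:ℝ) < q := by
    have : 0 < Fintype.card F := Fintype.card_pos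
    positivity
  set S : (Fin d → F) → ℝ :=
    fun x => ∑ t : F, ((A.filter fun y => dotp x y = t).card : ℝ) ^ 2 with hS
  have hvar : ∀ x : Fin d → F, (A.card : ℝ) ^ 2 / q ≤ S x := by
    intro x
    rw [div_le_iff₀ hq0]
    have := sq_sum_le_card_mul_sum_sq
      (s := (Finset.univ : Finset F))
      (f := fun t => ((A.filter fun y => dotp x y = t).card : ℝ))
    rw [aux_sum_fiber A x] at this
    simpa [mul_comm] using this
  have hsub : A₁ ⊆ Finset.univ := Finset.subset_univ A₁
  have key : ∑ x ∈ A₁, S x ≤ q⁻¹ * (A.card : ℝ) ^ 2 * A₁.card + q ^ d * A.card := by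
    have h1 : ∑ x ∈ A₁, (S x - (A.card : ℝ) ^ 2 / q)
        ≤ ∑ x : Fin d → F, (S x - (A.card : ℝ) ^ 2 / q) :=
      Finset.sum_le_sum_of_subset_of_nonneg hsub
        (fun x _ _ => sub_nonneg.mpr (hvar x))
    have h2 : ∑ x : Fin d → F, (S x - (A.card : ℝ) ^ 2 / q) ≤ q ^ d * A.card := by
      rw [Finset.sum_sub_distrib, Finset.sum_const, Finset.card_univ, nsmul_eq_mul]
      have hcard : (Fintype.card (Fin d → F) : ℝ) = q ^ d := by
        rw [hqdef]; norm_cast; simp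
      have h3 := aux_global A hd
      rw [← hqdef] at h3
      have hqd : q ^ (d - 1) * (A.card : ℝ) ^ 2
          = q ^ d * ((A.card : ℝ) ^ 2 / q) := by
        rw [mul_div_assoc']
        rw [eq_div_iff (ne_of_gt hq0)]
        rw [mul_assoc, mul_comm ((A.card : ℝ)^2) q, ← mul_assoc, ← pow_succ]
        congr 2
        omega
      rw [hcard]
      linarith
    calc ∑ x ∈ A₁, S x
        = ∑ x ∈ A₁, ((A.card : ℝ) ^ 2 / q) + ∑ x ∈ A₁, (S x - (A.card : ℝ) ^ 2 / q) := by
          rw [← Finset.sum_add_distrib]; congr 1; ext x; ring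
      _ ≤ A₁.card * ((A.card : ℝ) ^ 2 / q) + q ^ d * A.card := by
          rw [Finset.sum_const, nsmul_eq_mul]
          exact add_le_add_right (h1.trans h2) _
      _ = q⁻¹ * (A.card : ℝ) ^ 2 * A₁.card + q ^ d * A.card := by ring
  calc ∑ t₁ : F, ∑ x₁ ∈ A₁, (((A.filter fun y => dotp x₁ y = t₁).card : ℝ)) ^ 2
      = ∑ x ∈ A₁, S x := Finset.sum_comm
    _ ≤ q⁻¹ * (A.card : ℝ) ^ 2 * A₁.card + q ^ d * A.card := key
end

section
/- Let q be a prime power, d ≥ 1 an integer, χ a nontrivial additive character of 𝔽_q, A, B ⊆ 𝔽_q^d, and α ∈ 𝔽_q with α ≠ 0. Then |∑_{x ∈ B} S_{A,α}(x)| ≤ (|A||B|)^{1/2} · q^{(d+1)/2}, where S_{A,α}(x) = ∑_{s ∈ 𝔽_q^*} ∑_{y ∈ A} χ(s(x·y − α)). -/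
open Finset
set_option linter.unusedSectionVars false
set_option maxHeartbeats 1000000

section helpers
variable {F : Type} [Field F] [Fintype F] [DecidableEq F]

lemma conj_addChar (χ : AddChar F ℂ) (a : F) : (starRingEnd ℂ) (χ a) = χ (-a) := by
  have hR : 0 < ringChar F := (CharP.ringChar_ne_zero_of_finite F).bot_lt
  rw [AddChar.starComp_apply hR, AddChar.inv_apply]

lemma sum_char_full (χ : AddChar F ℂ) (hχ : χ ≠ 1) (b : F) :
    ∑ t : F, χ (t * b) = if b = 0 then (Fintype.card F : ℂ) else 0 := by
  split_ifs with h
  · simp [h]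
  · rw [show (0:ℂ) = ∑ u : F, χ u from (AddChar.sum_eq_zero_of_ne_one hχ).symm]
    exact Fintype.sum_bijective (· * b) (mulRight_bijective₀ b h) _ _ fun x => rfl

lemma sum_char_star (χ : AddChar F ℂ) (hχ : χ ≠ 1) {b : F} (hb : b ≠ 0) :
    ∑ t ∈ Finset.univ.erase (0 : F), χ (t * b) = -1 := by
  have h := sum_char_full χ hχ b
  rw [if_neg hb, ← Finset.add_sum_erase _ _ (Finset.mem_univ (0:F)), zero_mul,
    AddChar.map_zero_eq_one] at h
  linear_combination h

lemma addChar_map_sum {ι : Type*} (χ : AddChar F ℂ) (s : Finset ι) (f : ι → F) :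
    χ (∑ i ∈ s, f i) = ∏ i ∈ s, χ (f i) := by
  classical
  induction s using Finset.induction with
  | empty => simp
  | insert h ih => simp_all [AddChar.map_add_eq_mul]

lemma sum_char_dotp {d : ℕ} (χ : AddChar F ℂ) (hχ : χ ≠ 1) (v : Fin d → F) :
    ∑ x : Fin d → F, χ (dotp x v) =
      if v = 0 then ((Fintype.card F : ℂ)) ^ d else 0 := by
  have : ∑ x : Fin d → F, χ (dotp x v)
      = ∑ x ∈ Fintype.piFinset (fun _ : Fin d => (univ : Finset F)),
        ∏ i, χ (x i * v i) := by
    rw [Fintype.piFinset_univ]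
    exact Finset.sum_congr rfl fun x _ => addChar_map_sum χ _ _
  rw [this, ← Finset.prod_univ_sum (fun _ : Fin d => (univ : Finset F)) (fun i t => χ (t * v i))]
  simp_rw [sum_char_full χ hχ]
  by_cases hv : v = 0
  · simp [hv]
  · obtain ⟨i, hi⟩ := Function.ne_iff.mp hv
    rw [if_neg hv]
    exact Finset.prod_eq_zero (Finset.mem_univ i) (by simpa using hi)

lemma myInner_sum {d : ℕ} (χ : AddChar F ℂ) (y : Fin d → F) (A : Finset (Fin d → F))
    (α : F) {s' : F} (hs' : s' ≠ 0) :
    ∑ s ∈ Finset.univ.erase (0:F), ∑ y' ∈ A,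
        (if s • y = s' • y' then χ (α * (s' - s)) else 0)
      = ∑ t ∈ Finset.univ.erase (0:F),
        (if t • y ∈ A then χ ((α * (1 - t)) * s') else 0) := by
  rw [← Finset.sum_bij' (fun t _ => s' * t) (fun s _ => s'⁻¹ * s) ?_ ?_ ?_ ?_ ?_]
  · intro t ht
    simp only [Finset.mem_erase, Finset.mem_univ, and_true] at ht ⊢
    exact mul_ne_zero hs' ht
  · intro s hs
    simp only [Finset.mem_erase, Finset.mem_univ, and_true] at hs ⊢
    exact mul_ne_zero (inv_ne_zero hs') hs
  · intro t ht; field_simp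
  · intro s hs; field_simp
  · intro t ht
    simp only [Finset.mem_erase, Finset.mem_univ, and_true] at ht
    have hcond : ∀ y' : Fin d → F, (s' * t) • y = s' • y' ↔ y' = t • y := by
      intro y'
      constructor
      · intro h
        funext i
        have := congrFun h i
        simp only [Pi.smul_apply, smul_eq_mul] at this ⊢
        exact mul_left_cancel₀ hs' (by linear_combination -this)
      · rintro rfl
        funext i
        simp only [Pi.smul_apply, smul_eq_mul]; ring
    simp_rw [hcond]
    rw [Finset.sum_ite_eq' A (t • y) (fun _ => χ (α * (s' - s' * t)))]
    congr 1
    ring_nf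

lemma Ey_bound {d : ℕ} (χ : AddChar F ℂ) (hχ : χ ≠ 1) (A : Finset (Fin d → F))
    {y : Fin d → F} (hy : y ∈ A) {α : F} (hα : α ≠ 0) :
    ‖∑ s' ∈ Finset.univ.erase (0:F), ∑ s ∈ Finset.univ.erase (0:F),
      ∑ y' ∈ A, (if s • y = s' • y' then χ (α * (s' - s)) else 0)‖
      ≤ (Fintype.card F : ℝ) := by
  set q := Fintype.card F with hq
  have step1 : ∑ s' ∈ Finset.univ.erase (0:F), ∑ s ∈ Finset.univ.erase (0:F),
      ∑ y' ∈ A, (if s • y = s' • y' then χ (α * (s' - s)) else 0)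
      = ∑ t ∈ Finset.univ.erase (0:F),
        (if t • y ∈ A then (if t = 1 then ((q:ℂ) - 1) else -1) else 0) := by
    rw [Finset.sum_congr rfl (fun s' hs' => myInner_sum χ y A α
      (Finset.mem_erase.mp hs').1), Finset.sum_comm]
    refine Finset.sum_congr rfl fun t ht => ?_
    rw [Finset.sum_ite_irrel, Finset.sum_const_zero]
    congr 1
    by_cases h1 : t = 1
    · subst h1
      simp only [sub_self, mul_zero, zero_mul, AddChar.map_zero_eq_one, if_pos rfl,
        Finset.sum_const, nsmul_eq_mul, mul_one]
      rw [Finset.card_erase_of_mem (Finset.mem_univ _), Finset.card_univ, ← hq]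
      have : 2 ≤ q := Fintype.one_lt_card
      rw [if_true]
      push_cast [Nat.cast_sub (by omega : 1 ≤ q)]
      ring
    · rw [if_neg h1]
      have hb : α * (1 - t) ≠ 0 := mul_ne_zero hα (sub_ne_zero.mpr (Ne.symm h1))
      simp_rw [mul_comm (α * (1 - t))]
      exact sum_char_star χ hχ hb
  rw [step1]
  have h1mem : (1:F) ∈ Finset.univ.erase (0:F) :=
    Finset.mem_erase.mpr ⟨one_ne_zero, Finset.mem_univ _⟩
  rw [← Finset.add_sum_erase _ _ h1mem]
  rw [if_pos (by simpa using hy), if_pos rfl]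
  have hrest : ∑ t ∈ (Finset.univ.erase (0:F)).erase 1,
      (if t • y ∈ A then (if t = 1 then ((q:ℂ) - 1) else -1) else 0)
      = -(((((Finset.univ.erase (0:F)).erase 1).filter (fun t => t • y ∈ A)).card : ℂ)) := by
    rw [Finset.sum_congr rfl (fun t ht => by
      rw [if_neg (Finset.mem_erase.mp ht).1])]
    rw [Finset.sum_ite, Finset.sum_const, Finset.sum_const_zero, add_zero]
    simp
  rw [hrest]
  set m := ((((Finset.univ.erase (0:F)).erase 1).filter (fun t => t • y ∈ A)).card) with hm
  have hmle : m + 1 ≤ q := by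
    have h2 : 2 ≤ q := Fintype.one_lt_card
    have := Finset.card_filter_le ((Finset.univ.erase (0:F)).erase 1) (fun t => t • y ∈ A)
    rw [Finset.card_erase_of_mem h1mem, Finset.card_erase_of_mem (Finset.mem_univ _),
      Finset.card_univ, ← hq] at this
    omega
  have hmle' : (m:ℝ) + 1 ≤ (q:ℝ) := by exact_mod_cast hmle
  have : ((q:ℂ) - 1 + -(m:ℂ)) = (((q:ℝ) - 1 - m : ℝ) : ℂ) := by push_cast; ring
  rw [this, Complex.norm_real, Real.norm_eq_abs, abs_of_nonneg (by linarith)]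
  linarith

end helpers

/-- For `A, B ⊆ 𝔽_q^d` and `α ≠ 0`,
`|∑_{x ∈ B} S_{A,α}(x)| ≤ (|A||B|)^{1/2} q^{(d+1)/2}`, where
`S_{A,α}(x) = ∑_{s ∈ 𝔽_q^*} ∑_{y ∈ A} χ(s(x·y − α))`. -/
theorem stmt10 (F : Type) [Field F] [Fintype F] [DecidableEq F] (d : ℕ) (hd : 1 ≤ d)
    (χ : AddChar F ℂ) (hχ : χ ≠ 1) (A B : Finset (Fin d → F)) (α : F) (hα : α ≠ 0) :
    ‖∑ x ∈ B, ∑ s ∈ Finset.univ.erase (0 : F), ∑ y ∈ A,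
        χ (s * (dotp x y - α))‖ ≤
      ((A.card : ℝ) * (B.card : ℝ)) ^ ((1 : ℝ) / 2) *
        (Fintype.card F : ℝ) ^ (((d : ℝ) + 1) / 2) := by
  classical
  set q := Fintype.card F with hqdef
  set Fs := Finset.univ.erase (0:F) with hFs
  set S : (Fin d → F) → ℂ := fun x => ∑ s ∈ Fs, ∑ y ∈ A, χ (s * (dotp x y - α)) with hS
  -- Step 1: expansion
  have key : ((∑ x : Fin d → F, Complex.normSq (S x) : ℝ) : ℂ)
      = (q:ℂ)^d * ∑ y ∈ A, ∑ s ∈ Fs, ∑ s' ∈ Fs, ∑ y' ∈ A,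
          (if s • y = s' • y' then χ (α * (s' - s)) else 0) := by
    push_cast
    calc ∑ x : Fin d → F, (Complex.normSq (S x) : ℂ)
        = ∑ x : Fin d → F, S x * (starRingEnd ℂ) (S x) := by
          simp [Complex.mul_conj]
      _ = ∑ x : Fin d → F, ∑ s ∈ Fs, ∑ s' ∈ Fs, ∑ y ∈ A, ∑ y' ∈ A,
            χ (dotp x (s • y - s' • y')) * χ (α * (s' - s)) := by
          refine Finset.sum_congr rfl fun x _ => ?_
          rw [hS]
          simp only []
          rw [map_sum, Finset.sum_mul_sum]
          refine Finset.sum_congr rfl fun s hs => ?_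
          refine Finset.sum_congr rfl fun s' hs' => ?_
          rw [map_sum, Finset.sum_mul_sum]
          refine Finset.sum_congr rfl fun y hy => ?_
          refine Finset.sum_congr rfl fun y' hy' => ?_
          rw [conj_addChar, ← AddChar.map_add_eq_mul, ← AddChar.map_add_eq_mul]
          congr 1
          have hdot : dotp x (s • y - s' • y') = s * dotp x y - s' * dotp x y' := by
            simp only [dotp, Pi.sub_apply, Pi.smul_apply, smul_eq_mul, mul_sub,
              Finset.mul_sum, ← Finset.sum_sub_distrib]
            exact Finset.sum_congr rfl fun i _ => by ring
          rw [hdot]; ring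
      _ = ∑ s ∈ Fs, ∑ s' ∈ Fs, ∑ y ∈ A, ∑ y' ∈ A,
            (∑ x : Fin d → F, χ (dotp x (s • y - s' • y'))) * χ (α * (s' - s)) := by
          rw [Finset.sum_comm]
          refine Finset.sum_congr rfl fun s _ => ?_
          rw [Finset.sum_comm]
          refine Finset.sum_congr rfl fun s' _ => ?_
          rw [Finset.sum_comm]
          refine Finset.sum_congr rfl fun y _ => ?_
          rw [Finset.sum_comm]
          refine Finset.sum_congr rfl fun y' _ => ?_
          rw [Finset.sum_mul]
      _ = ∑ s ∈ Fs, ∑ s' ∈ Fs, ∑ y ∈ A, ∑ y' ∈ A,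
            ((q:ℂ)^d * if s • y = s' • y' then χ (α * (s' - s)) else 0) := by
          refine Finset.sum_congr rfl fun s _ => Finset.sum_congr rfl fun s' _ =>
            Finset.sum_congr rfl fun y _ => Finset.sum_congr rfl fun y' _ => ?_
          rw [sum_char_dotp χ hχ (s • y - s' • y')]
          by_cases h : s • y = s' • y'
          · rw [if_pos (sub_eq_zero.mpr h), if_pos h]
          · rw [if_neg (fun hc => h (sub_eq_zero.mp hc)), if_neg h]; ring
      _ = (q:ℂ)^d * ∑ y ∈ A, ∑ s ∈ Fs, ∑ s' ∈ Fs, ∑ y' ∈ A,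
            (if s • y = s' • y' then χ (α * (s' - s)) else 0) := by
          simp_rw [← Finset.mul_sum]
          congr 1
          calc ∑ s ∈ Fs, ∑ s' ∈ Fs, ∑ y ∈ A, ∑ y' ∈ A,
                (if s • y = s' • y' then χ (α * (s' - s)) else 0)
              = ∑ s ∈ Fs, ∑ y ∈ A, ∑ s' ∈ Fs, ∑ y' ∈ A,
                (if s • y = s' • y' then χ (α * (s' - s)) else 0) :=
                Finset.sum_congr rfl fun s _ => Finset.sum_comm
            _ = ∑ y ∈ A, ∑ s ∈ Fs, ∑ s' ∈ Fs, ∑ y' ∈ A,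
                (if s • y = s' • y' then χ (α * (s' - s)) else 0) := Finset.sum_comm
  -- Step 2: the quadratic bound
  have hsum : ∑ x : Fin d → F, Complex.normSq (S x) ≤ (A.card : ℝ) * (q:ℝ)^(d+1) := by
    have h0 : (0:ℝ) ≤ ∑ x : Fin d → F, Complex.normSq (S x) :=
      Finset.sum_nonneg fun _ _ => Complex.normSq_nonneg _
    have : (∑ x : Fin d → F, Complex.normSq (S x))
        = ‖((∑ x : Fin d → F, Complex.normSq (S x) : ℝ) : ℂ)‖ := by
      rw [Complex.norm_real, Real.norm_eq_abs, abs_of_nonneg h0]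
    rw [this, key, norm_mul]
    have habsq : ‖(q:ℂ)^d‖ = (q:ℝ)^d := by
      rw [norm_pow, Complex.norm_natCast]
    rw [habsq]
    have hEy : ‖∑ y ∈ A, ∑ s ∈ Fs, ∑ s' ∈ Fs, ∑ y' ∈ A,
        (if s • y = s' • y' then χ (α * (s' - s)) else 0)‖ ≤ (A.card : ℝ) * (q:ℝ) := by
      refine le_trans (norm_sum_le _ _) ?_
      have : ∀ y ∈ A, ‖∑ s ∈ Fs, ∑ s' ∈ Fs, ∑ y' ∈ A,
          (if s • y = s' • y' then χ (α * (s' - s)) else 0)‖ ≤ (q:ℝ) := by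
        intro y hy
        rw [Finset.sum_comm]
        exact Ey_bound χ hχ A hy hα
      calc ∑ y ∈ A, ‖∑ s ∈ Fs, ∑ s' ∈ Fs, ∑ y' ∈ A,
            (if s • y = s' • y' then χ (α * (s' - s)) else 0)‖
          ≤ ∑ y ∈ A, (q:ℝ) := Finset.sum_le_sum this
        _ = (A.card : ℝ) * (q:ℝ) := by rw [Finset.sum_const, nsmul_eq_mul]
    calc (q:ℝ)^d * ‖∑ y ∈ A, ∑ s ∈ Fs, ∑ s' ∈ Fs, ∑ y' ∈ A,
          (if s • y = s' • y' then χ (α * (s' - s)) else 0)‖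
        ≤ (q:ℝ)^d * ((A.card : ℝ) * (q:ℝ)) := by
          exact mul_le_mul_of_nonneg_left hEy (by positivity)
      _ = (A.card : ℝ) * (q:ℝ)^(d+1) := by ring
  -- Step 3: Cauchy-Schwarz
  have habs1 : ‖∑ x ∈ B, S x‖ ≤ ∑ x ∈ B, ‖S x‖ :=
    norm_sum_le _ _
  have hcs : (∑ x ∈ B, ‖S x‖)^2
      ≤ (B.card : ℝ) * ∑ x ∈ B, Complex.normSq (S x) := by
    have := Finset.sum_mul_sq_le_sq_mul_sq B (fun _ => (1:ℝ)) (fun x => ‖S x‖)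
    simp only [one_mul, one_pow, Finset.sum_const, nsmul_eq_mul, mul_one] at this
    calc (∑ x ∈ B, ‖S x‖)^2
        ≤ (B.card : ℝ) * ∑ x ∈ B, (‖S x‖)^2 := this
      _ = (B.card : ℝ) * ∑ x ∈ B, Complex.normSq (S x) := by
          simp_rw [Complex.sq_norm]
  have hext : ∑ x ∈ B, Complex.normSq (S x) ≤ ∑ x : Fin d → F, Complex.normSq (S x) :=
    Finset.sum_le_sum_of_subset_of_nonneg (Finset.subset_univ B)
      (fun x _ _ => Complex.normSq_nonneg _)
  -- Combine
  have hX2 : (‖∑ x ∈ B, S x‖)^2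
      ≤ (A.card : ℝ) * (B.card : ℝ) * (q:ℝ)^(d+1) := by
    have h1 : (‖∑ x ∈ B, S x‖)^2 ≤ (∑ x ∈ B, ‖S x‖)^2 := by
      apply pow_le_pow_left₀ (norm_nonneg _) habs1
    have h2 : (B.card : ℝ) * ∑ x ∈ B, Complex.normSq (S x)
        ≤ (B.card : ℝ) * ((A.card : ℝ) * (q:ℝ)^(d+1)) := by
      apply mul_le_mul_of_nonneg_left (le_trans hext hsum) (by positivity)
    nlinarith [hcs]
  -- Finish
  have hXnn : (0:ℝ) ≤ ‖∑ x ∈ B, S x‖ := norm_nonneg _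
  have hrhs : ((A.card : ℝ) * (B.card : ℝ)) ^ ((1 : ℝ) / 2) *
      (q : ℝ) ^ (((d : ℝ) + 1) / 2)
      = Real.sqrt ((A.card : ℝ) * (B.card : ℝ) * (q:ℝ)^(d+1)) := by
    rw [Real.sqrt_mul (by positivity), Real.sqrt_eq_rpow, Real.sqrt_eq_rpow]
    congr 1
    rw [← Real.rpow_natCast (q:ℝ) (d+1), ← Real.rpow_mul (by positivity)]
    congr 1
    push_cast
    ring
  rw [hrhs]
  calc ‖∑ x ∈ B, S x‖
      = Real.sqrt ((‖∑ x ∈ B, S x‖)^2) := by rw [Real.sqrt_sq hXnn]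
    _ ≤ Real.sqrt ((A.card : ℝ) * (B.card : ℝ) * (q:ℝ)^(d+1)) := Real.sqrt_le_sqrt hX2
end

section
/- Let q be a prime power, d ≥ 1 an integer, χ a nontrivial additive character of 𝔽_q, A ⊆ 𝔽_q^d, and α ∈ 𝔽_q with α ≠ 0. Then ∑_{x ∈ 𝔽_q^d} |S_{A,α}(x)|^2 ≤ q^{d+1}·|A|, where S_{A,α}(x) = ∑_{s ∈ 𝔽_q^*} ∑_{y ∈ A} χ(s(x·y − α)). -/
lemma dotp_smul_sub {F : Type} [Field F] {d : ℕ} (x y y' : Fin d → F) (s s' : F) :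
    dotp x (s • y - s' • y') = s * dotp x y - s' * dotp x y' := by
  simp only [dotp, Pi.sub_apply, Pi.smul_apply, smul_eq_mul, mul_sub,
    Finset.sum_sub_distrib, Finset.mul_sum]
  congr 1 <;> exact Finset.sum_congr rfl fun i _ => by ring

lemma sum_char_vec {F : Type} [Field F] [Fintype F] [DecidableEq F] {d : ℕ}
    (χ : AddChar F ℂ) (hχ : χ ≠ 1) (v : Fin d → F) :
    ∑ x : Fin d → F, χ (dotp x v) = if v = 0 then ((Fintype.card F : ℂ) ^ d) else 0 := by
  classical
  split_ifs with h
  · subst h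
    simp [dotp, Finset.sum_const, Fintype.card_fun]
  · let φ : (Fin d → F) →+ F :=
      { toFun := fun x => dotp x v
        map_zero' := by simp [dotp]
        map_add' := fun a b => by
          simp [dotp, add_mul, Finset.sum_add_distrib] }
    obtain ⟨i, hi⟩ : ∃ i, v i ≠ 0 := by
      by_contra hc; push_neg at hc; exact h (funext hc)
    obtain ⟨u, hu⟩ := AddChar.ne_one_iff.mp hχ
    have hne : χ.compAddMonoidHom φ ≠ 1 := by
      rw [AddChar.ne_one_iff]
      refine ⟨Pi.single i (u * (v i)⁻¹), ?_⟩
      have hdp : dotp (Pi.single i (u * (v i)⁻¹)) v = u := by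
        rw [dotp, Finset.sum_eq_single i]
        · rw [Pi.single_eq_same]; field_simp
        · intro j _ hj; rw [Pi.single_eq_of_ne hj, zero_mul]
        · intro hi'; exact absurd (Finset.mem_univ i) hi'
      exact fun h' => hu (by rw [← hdp]; exact h')
    have := AddChar.sum_eq_zero_of_ne_one hne
    exact this

/-- For `A ⊆ 𝔽_q^d` and `α ≠ 0`,
`∑_{x ∈ 𝔽_q^d} |S_{A,α}(x)|^2 ≤ q^{d+1} |A|`, where
`S_{A,α}(x) = ∑_{s ∈ 𝔽_q^*} ∑_{y ∈ A} χ(s(x·y − α))`. -/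
theorem stmt11 (F : Type) [Field F] [Fintype F] [DecidableEq F] (d : ℕ) (hd : 1 ≤ d)
    (χ : AddChar F ℂ) (hχ : χ ≠ 1) (A : Finset (Fin d → F)) (α : F) (hα : α ≠ 0) :
    ∑ x : Fin d → F,
        (‖(∑ s ∈ Finset.univ.erase (0 : F), ∑ y ∈ A,
          χ (s * (dotp x y - α)))‖) ^ 2 ≤
      (Fintype.card F : ℝ) ^ (d + 1) * (A.card : ℝ) := by
  classical
  set q := Fintype.card F with hq
  set E := Finset.univ.erase (0 : F) with hE
  set S : (Fin d → F) → ℂ := fun x => ∑ s ∈ E, ∑ y ∈ A, χ (s * (dotp x y - α)) with hS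
  have hprim : χ.IsPrimitive := AddChar.IsPrimitive.of_ne_one hχ
  -- sum of χ(s*β) over s ≠ 0
  have hsumE : ∀ β : F, ∑ s ∈ E, χ (s * β) = (if β = 0 then (q : ℂ) else 0) - 1 := by
    intro β
    have h0 : (0 : F) ∈ (Finset.univ : Finset F) := Finset.mem_univ 0
    have h1 := Finset.add_sum_erase Finset.univ (fun s => χ (s * β)) h0
    simp only [zero_mul, AddChar.map_zero_eq_one] at h1
    rw [AddChar.sum_mulShift β hprim, ← hE] at h1
    push_cast at h1
    exact eq_sub_of_add_eq' h1
  set c : F → ℕ := fun t => (A.filter fun y => t⁻¹ • y ∈ A).card with hc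
  set M : ℕ := ∑ t ∈ E.erase 1, c t with hM
  -- the main complex identity
  have key : ∑ x : Fin d → F, S x * (starRingEnd ℂ) (S x)
      = ((A.card : ℂ) * ((q : ℂ) - 1) - (M : ℂ)) * (q : ℂ) ^ d := by
    have expand : ∀ x : Fin d → F, S x * (starRingEnd ℂ) (S x)
        = ∑ s ∈ E, ∑ y ∈ A, ∑ s' ∈ E, ∑ y' ∈ A,
            χ ((s' - s) * α) * χ (dotp x (s • y - s' • y')) := by
      intro x
      rw [hS]
      simp only [map_sum]
      rw [Finset.sum_mul]
      refine Finset.sum_congr rfl fun s _ => ?_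
      rw [Finset.sum_mul]
      refine Finset.sum_congr rfl fun y _ => ?_
      rw [Finset.mul_sum]
      refine Finset.sum_congr rfl fun s' _ => ?_
      rw [Finset.mul_sum]
      refine Finset.sum_congr rfl fun y' _ => ?_
      rw [← AddChar.map_neg_eq_conj, ← AddChar.map_add_eq_mul, ← AddChar.map_add_eq_mul]
      congr 1
      rw [dotp_smul_sub]
      ring
    calc ∑ x : Fin d → F, S x * (starRingEnd ℂ) (S x)
        = ∑ x : Fin d → F, ∑ s ∈ E, ∑ y ∈ A, ∑ s' ∈ E, ∑ y' ∈ A,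
            χ ((s' - s) * α) * χ (dotp x (s • y - s' • y')) :=
          Finset.sum_congr rfl fun x _ => expand x
      _ = ∑ s ∈ E, ∑ y ∈ A, ∑ s' ∈ E, ∑ y' ∈ A,
            χ ((s' - s) * α) * ∑ x : Fin d → F, χ (dotp x (s • y - s' • y')) := by
          rw [Finset.sum_comm]
          refine Finset.sum_congr rfl fun s _ => ?_
          rw [Finset.sum_comm]
          refine Finset.sum_congr rfl fun y _ => ?_
          rw [Finset.sum_comm]
          refine Finset.sum_congr rfl fun s' _ => ?_
          rw [Finset.sum_comm]
          refine Finset.sum_congr rfl fun y' _ => ?_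
          rw [Finset.mul_sum]
      _ = ∑ s ∈ E, ∑ y ∈ A, ∑ s' ∈ E,
            (if (s'⁻¹ * s) • y ∈ A then χ ((s' - s) * α) * (q : ℂ) ^ d else 0) := by
          refine Finset.sum_congr rfl fun s hs => ?_
          refine Finset.sum_congr rfl fun y _ => ?_
          refine Finset.sum_congr rfl fun s' hs' => ?_
          have hs'0 : s' ≠ 0 := Finset.ne_of_mem_erase hs'
          have conv : ∀ y' : Fin d → F,
              χ ((s' - s) * α) * ∑ x : Fin d → F, χ (dotp x (s • y - s' • y'))
              = if y' = (s'⁻¹ * s) • y then χ ((s' - s) * α) * (q : ℂ) ^ d else 0 := by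
            intro y'
            rw [sum_char_vec χ hχ]
            have hcond : (s • y - s' • y' = 0) ↔ (y' = (s'⁻¹ * s) • y) := by
              rw [sub_eq_zero, ← smul_smul]
              rw [eq_comm, eq_inv_smul_iff₀ hs'0, eq_comm]
            rw [mul_ite, mul_zero]
            simp only [hcond]
            rw [← hq]
          rw [Finset.sum_congr rfl fun y' _ => conv y']
          rw [Finset.sum_ite_eq' A ((s'⁻¹ * s) • y) (fun _ => χ ((s' - s) * α) * (q : ℂ) ^ d)]
      _ = ∑ s ∈ E, ∑ y ∈ A, ∑ t ∈ E,
            (if t⁻¹ • y ∈ A then χ (s * ((t - 1) * α)) * (q : ℂ) ^ d else 0) := by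
          refine Finset.sum_congr rfl fun s hs => ?_
          have hs0 : s ≠ 0 := Finset.ne_of_mem_erase hs
          refine Finset.sum_congr rfl fun y _ => ?_
          refine Finset.sum_bij' (fun s' _ => s' * s⁻¹) (fun t _ => t * s) ?_ ?_ ?_ ?_ ?_
          · intro s' hs'
            have hs'0 : s' ≠ 0 := Finset.ne_of_mem_erase hs'
            simp only [hE]
            exact Finset.mem_erase.mpr ⟨mul_ne_zero hs'0 (inv_ne_zero hs0), Finset.mem_univ _⟩
          · intro t ht
            have ht0 : t ≠ 0 := Finset.ne_of_mem_erase ht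
            simp only [hE]
            exact Finset.mem_erase.mpr ⟨mul_ne_zero ht0 hs0, Finset.mem_univ _⟩
          · intro s' _
            rw [mul_assoc, inv_mul_cancel₀ hs0, mul_one]
          · intro t _
            rw [mul_assoc, mul_inv_cancel₀ hs0, mul_one]
          · intro s' hs'
            have hs'0 : s' ≠ 0 := Finset.ne_of_mem_erase hs'
            have e2 : s'⁻¹ * s = (s' * s⁻¹)⁻¹ := by
              rw [mul_inv, inv_inv, mul_comm]
            have e3 : (s' - s) * α = s * ((s' * s⁻¹ - 1) * α) := by
              field_simp
            rw [e2, e3]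
      _ = ∑ t ∈ E, ∑ y ∈ A, ∑ s ∈ E,
            (if t⁻¹ • y ∈ A then χ (s * ((t - 1) * α)) * (q : ℂ) ^ d else 0) := by
          rw [show (∑ s ∈ E, ∑ y ∈ A, ∑ t ∈ E,
              (if t⁻¹ • y ∈ A then χ (s * ((t - 1) * α)) * (q : ℂ) ^ d else 0))
              = ∑ s ∈ E, ∑ t ∈ E, ∑ y ∈ A,
              (if t⁻¹ • y ∈ A then χ (s * ((t - 1) * α)) * (q : ℂ) ^ d else 0) from
            Finset.sum_congr rfl fun s _ => Finset.sum_comm]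
          rw [Finset.sum_comm]
          exact Finset.sum_congr rfl fun t _ => Finset.sum_comm
      _ = ∑ t ∈ E, (c t : ℂ) * (((if t = 1 then (q : ℂ) else 0) - 1) * (q : ℂ) ^ d) := by
          refine Finset.sum_congr rfl fun t ht => ?_
          have inner : ∀ y : Fin d → F, (∑ s ∈ E,
              if t⁻¹ • y ∈ A then χ (s * ((t - 1) * α)) * (q : ℂ) ^ d else 0)
              = if t⁻¹ • y ∈ A then (((if t = 1 then (q : ℂ) else 0) - 1) * (q : ℂ) ^ d) else 0 := by
            intro y
            by_cases hy : t⁻¹ • y ∈ A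
            · simp only [hy, if_true]
              rw [← Finset.sum_mul, hsumE ((t - 1) * α)]
              congr 2
              have : (t - 1) * α = 0 ↔ t = 1 := by
                rw [mul_eq_zero, sub_eq_zero]
                simp [hα]
              simp only [this]
            · simp [hy]
          rw [Finset.sum_congr rfl fun y _ => inner y]
          rw [Finset.sum_ite, Finset.sum_const, Finset.sum_const_zero, add_zero,
            nsmul_eq_mul]
      _ = ((A.card : ℂ) * ((q : ℂ) - 1) - (M : ℂ)) * (q : ℂ) ^ d := by
          have h1E : (1 : F) ∈ E := by
            rw [hE]; exact Finset.mem_erase.mpr ⟨one_ne_zero, Finset.mem_univ _⟩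
          rw [← Finset.add_sum_erase E _ h1E]
          have hc1 : c 1 = A.card := by
            rw [hc]
            simp only [inv_one, one_smul]
            rw [Finset.filter_true_of_mem fun y hy => hy]
          have hrest : ∑ t ∈ E.erase 1, (c t : ℂ) * (((if t = 1 then (q : ℂ) else 0) - 1) * (q : ℂ) ^ d)
              = -(M : ℂ) * (q : ℂ) ^ d := by
            rw [hM]
            push_cast
            have hterm : ∀ t ∈ E.erase 1,
                (c t : ℂ) * (((if t = 1 then (q : ℂ) else 0) - 1) * (q : ℂ) ^ d)
                = -((c t : ℂ) * (q : ℂ) ^ d) := by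
              intro t ht
              rw [if_neg (Finset.ne_of_mem_erase ht)]
              ring
            rw [Finset.sum_congr rfl hterm, Finset.sum_neg_distrib, ← Finset.sum_mul]
            ring
          rw [hrest, hc1, if_pos rfl]
          ring
  -- pass to the reals
  have habs : ∑ x : Fin d → F, S x * (starRingEnd ℂ) (S x)
      = ((∑ x : Fin d → F, (‖S x‖) ^ 2 : ℝ) : ℂ) := by
    push_cast
    refine Finset.sum_congr rfl fun x _ => ?_
    rw [Complex.mul_conj, Complex.normSq_eq_norm_sq]
    push_cast
    ring
  have hreal : ∑ x : Fin d → F, (‖S x‖) ^ 2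
      = ((A.card : ℝ) * ((q : ℝ) - 1) - (M : ℝ)) * (q : ℝ) ^ d := by
    have := habs.symm.trans key
    rw [show (((A.card : ℂ) * ((q : ℂ) - 1) - (M : ℂ)) * (q : ℂ) ^ d)
        = ((((A.card : ℝ) * ((q : ℝ) - 1) - (M : ℝ)) * (q : ℝ) ^ d : ℝ) : ℂ) by push_cast; ring] at this
    exact_mod_cast this
  rw [hreal]
  have hq1 : (1 : ℝ) ≤ (q : ℝ) := by
    have : 0 < q := Fintype.card_pos
    exact_mod_cast this
  have hQ : (0 : ℝ) ≤ (q : ℝ) ^ d := by positivity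
  have hMnn : (0 : ℝ) ≤ (M : ℝ) := Nat.cast_nonneg M
  have hann : (0 : ℝ) ≤ (A.card : ℝ) := Nat.cast_nonneg _
  have hstep : ((A.card : ℝ) * ((q : ℝ) - 1) - (M : ℝ)) ≤ (q : ℝ) * (A.card : ℝ) := by nlinarith
  calc ((A.card : ℝ) * ((q : ℝ) - 1) - (M : ℝ)) * (q : ℝ) ^ d
      ≤ ((q : ℝ) * (A.card : ℝ)) * (q : ℝ) ^ d := by
        exact mul_le_mul_of_nonneg_right hstep hQ
    _ = (q : ℝ) ^ (d + 1) * (A.card : ℝ) := by rw [pow_succ]; ring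
end

section
/- Let q be a prime power, d ≥ 1 an integer, χ a nontrivial additive character of 𝔽_q, A ⊆ 𝔽_q^d, and α ∈ 𝔽_q with α ≠ 0. Then |∑_{s, s' ∈ 𝔽_q^*} ∑_{y, y' ∈ A, s y = s' y'} χ(α(s' − s))| ≤ |A|·q, where the inner sum is over all pairs (y, y') ∈ A × A with s y = s' y' in 𝔽_q^d. -/
open Finset

lemma char_sum_erase {F : Type} [Field F] [Fintype F] [DecidableEq F]
    (χ : AddChar F ℂ) (hχ : χ ≠ 1) (c : F) (hc : c ≠ 0) :
    ∑ s ∈ Finset.univ.erase (0 : F), χ (c * s) = -1 := by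
  have h0 : ∑ s : F, χ (c * s) = ∑ s : F, χ s :=
    Fintype.sum_equiv (Equiv.mulLeft₀ c hc) _ _ (fun s => rfl)
  have h1 : ∑ s : F, χ s = 0 := by
    rw [AddChar.sum_eq_zero_iff_ne_zero]; exact hχ
  rw [Finset.sum_erase_eq_sub (Finset.mem_univ _), h0, h1, mul_zero,
    AddChar.map_zero_eq_one]
  ring

/-- For `A ⊆ 𝔽_q^d` and `α ≠ 0`,
`|∑_{s,s' ∈ 𝔽_q^*} ∑_{y,y' ∈ A, sy = s'y'} χ(α(s' − s))| ≤ |A| q`. -/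
theorem stmt12 (F : Type) [Field F] [Fintype F] [DecidableEq F] (d : ℕ) (hd : 1 ≤ d)
    (χ : AddChar F ℂ) (hχ : χ ≠ 1) (A : Finset (Fin d → F)) (α : F) (hα : α ≠ 0) :
    ‖(∑ s ∈ Finset.univ.erase (0 : F), ∑ s' ∈ Finset.univ.erase (0 : F),
        ∑ y ∈ A, ∑ y' ∈ A,
          if s • y = s' • y' then χ (α * (s' - s)) else 0)‖ ≤
      (A.card : ℝ) * (Fintype.card F : ℝ) := by
  classical
  set q := Fintype.card F with hq
  set N : F → ℕ := fun l => (A.filter (fun y => l • y ∈ A)).card with hN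
  -- Step 1: reindex s = l * s' for each fixed s'
  have step1 : ∀ s' ∈ Finset.univ.erase (0 : F),
      ∑ s ∈ Finset.univ.erase (0 : F), (∑ y ∈ A, ∑ y' ∈ A,
        if s • y = s' • y' then χ (α * (s' - s)) else 0)
      = ∑ l ∈ Finset.univ.erase (0 : F), (N l : ℂ) * χ (α * (1 - l) * s') := by
    intro s' hs'
    have hs'0 : s' ≠ 0 := (Finset.mem_erase.mp hs').1
    refine (Finset.sum_equiv (Equiv.mulRight₀ s' hs'0) (fun l => by simp [hs'0]) ?_).symm
    intro l hl
    have hc : ∀ y y' : Fin d → F, ((l * s') • y = s' • y') ↔ (l • y = y') := by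
      intro y y'
      rw [mul_comm, mul_smul]
      exact (smul_right_injective (Fin d → F) hs'0).eq_iff
    simp only [Equiv.mulRight₀_apply]
    calc (N l : ℂ) * χ (α * (1 - l) * s')
        = ∑ y ∈ A, (if l • y ∈ A then χ (α * (s' - l * s')) else 0) := by
          rw [← Finset.sum_filter, Finset.sum_const, nsmul_eq_mul]
          congr 2
          ring
      _ = ∑ y ∈ A, ∑ y' ∈ A, if (l * s') • y = s' • y' then χ (α * (s' - l * s')) else 0 := by
          refine Finset.sum_congr rfl fun y _ => ?_
          simp_rw [hc]
          rw [Finset.sum_ite_eq A (l • y) (fun _ => χ (α * (s' - l * s')))]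
  have key : (∑ s ∈ Finset.univ.erase (0 : F), ∑ s' ∈ Finset.univ.erase (0 : F),
        ∑ y ∈ A, ∑ y' ∈ A, if s • y = s' • y' then χ (α * (s' - s)) else 0)
      = ∑ l ∈ Finset.univ.erase (0 : F), (N l : ℂ) *
          ∑ s' ∈ Finset.univ.erase (0 : F), χ (α * (1 - l) * s') := by
    rw [Finset.sum_comm, Finset.sum_congr rfl step1, Finset.sum_comm]
    exact Finset.sum_congr rfl fun l _ => (Finset.mul_sum _ _ _).symm
  -- Step 2: evaluate the character sums
  have h1mem : (1 : F) ∈ Finset.univ.erase (0 : F) := by simp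
  have hN1 : N 1 = A.card := by
    simp only [hN, one_smul]
    rw [Finset.filter_true_of_mem (fun x hx => hx)]
  have hcard_erase : (Finset.univ.erase (0 : F)).card = q - 1 := by
    simp [Finset.card_erase_of_mem, hq]
  set M : ℕ := ∑ l ∈ (Finset.univ.erase (0 : F)).erase 1, N l with hM
  have key2 : (∑ s ∈ Finset.univ.erase (0 : F), ∑ s' ∈ Finset.univ.erase (0 : F),
        ∑ y ∈ A, ∑ y' ∈ A, if s • y = s' • y' then χ (α * (s' - s)) else 0)
      = ((A.card : ℝ) * ((q : ℝ) - 1) - (M : ℝ) : ℝ) := by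
    rw [key, ← Finset.add_sum_erase _ _ h1mem]
    have hterm1 : (N 1 : ℂ) * ∑ s' ∈ Finset.univ.erase (0 : F), χ (α * (1 - 1) * s')
        = (A.card : ℂ) * ((q : ℂ) - 1) := by
      have : ∀ s' : F, χ (α * (1 - (1:F)) * s') = 1 := by
        intro s'; norm_num
      rw [hN1]
      simp only [this, Finset.sum_const, hcard_erase, nsmul_eq_mul, mul_one]
      have hq2 : 1 ≤ q := Fintype.card_pos
      push_cast [Nat.cast_sub hq2]
      ring
    have hterm2 : ∀ l ∈ (Finset.univ.erase (0 : F)).erase 1,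
        (N l : ℂ) * ∑ s' ∈ Finset.univ.erase (0 : F), χ (α * (1 - l) * s')
        = -(N l : ℂ) := by
      intro l hl
      have hl1 : l ≠ 1 := (Finset.mem_erase.mp hl).1
      have hcne : α * (1 - l) ≠ 0 := by
        refine mul_ne_zero hα ?_
        intro h
        exact hl1 (by linear_combination -h)
      rw [char_sum_erase χ hχ _ hcne]
      ring
    rw [hterm1, Finset.sum_congr rfl hterm2, Finset.sum_neg_distrib]
    push_cast [hM]
    ring
  rw [key2, Complex.norm_real, Real.norm_eq_abs]
  -- Step 3: bounds
  have hq2 : 2 ≤ q := Fintype.one_lt_card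
  have hMle : M ≤ (q - 2) * A.card := by
    have h1 : ((Finset.univ.erase (0 : F)).erase 1).card = q - 2 := by
      rw [Finset.card_erase_of_mem h1mem, hcard_erase]; omega
    calc M ≤ ((Finset.univ.erase (0 : F)).erase 1).card • A.card := by
            refine Finset.sum_le_card_nsmul _ _ _ fun l _ => ?_
            exact Finset.card_filter_le _ _
      _ = (q - 2) * A.card := by rw [h1, smul_eq_mul]
  have hMR : (M : ℝ) ≤ ((q : ℝ) - 2) * A.card := by
    calc (M : ℝ) ≤ ((q - 2 : ℕ) : ℝ) * A.card := by exact_mod_cast hMle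
      _ = ((q : ℝ) - 2) * A.card := by rw [Nat.cast_sub hq2]; norm_num
  have hM0 : (0 : ℝ) ≤ (M : ℝ) := Nat.cast_nonneg _
  have hA0 : (0 : ℝ) ≤ (A.card : ℝ) := Nat.cast_nonneg _
  rw [abs_le]
  constructor <;> nlinarith [hMR, hM0, hA0, (by exact_mod_cast hq2 : (2:ℝ) ≤ (q:ℝ))]
end
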